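/- arXiv:2006.04086 — 9 statements merged into one kernel-verified Lean document; each statement's English description precedes it below -/
import Mathlib

section
/- Suppose M is an irredundant mixed orthogonal array of strength k with minimum Hamming distance MD(M) = b ≥ k+1. If any c ≤ b−(k+1) columns are removed from M, the resulting array is still an irredundant mixed orthogonal array of strength k. -/
open Finset

/-- `M` is a mixed orthogonal array of strength `k`. -/
def IsMOA {r : ℕ} {ι : Type} [Fintype ι] [DecidableEq ι]
    (d : ι → ℕ) (k : ℕ) (M : Fin r → ∀ j, Fin (d j)) : Prop :=
  ∀ (cols : Fin k ↪ ι) (t t' : ∀ s, Fin (d (cols s))),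
    (univ.filter fun x => ∀ s, M x (cols s) = t s).card =
    (univ.filter fun x => ∀ s, M x (cols s) = t' s).card

/-- `M` is irredundant. -/
def IsIrredundant {r : ℕ} {ι : Type} [Fintype ι] [DecidableEq ι]
    (d : ι → ℕ) (k : ℕ) (M : Fin r → ∀ j, Fin (d j)) : Prop :=
  ∀ S : Finset ι, S.card = k → ∀ x y : Fin r, x ≠ y → ∃ j ∉ S, M x j ≠ M y j

/-- Removing any `c ≤ b - (k+1)` columns from an irredundant MOA of strength `k`
with minimum Hamming distance `b ≥ k+1` yields again an irredundant MOA of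
strength `k`. -/
theorem irmoa_delete_columns {r N k b c : ℕ} (d : Fin N → ℕ)
    (M : Fin r → ∀ j, Fin (d j))
    (hM : IsMOA d k M) (hirr : IsIrredundant d k M)
    (hb : ∀ x y : Fin r, x ≠ y → b ≤ hammingDist (M x) (M y))
    (hbk : k + 1 ≤ b) (hc : c + (k + 1) ≤ b)
    (T : Finset (Fin N)) (hT : T.card = c) :
    IsMOA (fun j : {j : Fin N // j ∉ T} => d j.1) k (fun x j => M x j.1) ∧
    IsIrredundant (fun j : {j : Fin N // j ∉ T} => d j.1) k (fun x j => M x j.1) := by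
  constructor
  · intro cols t t'
    exact hM (cols.trans (Function.Embedding.subtype _)) t t'
  · intro S hS x y hxy
    have hD : b ≤ (univ.filter fun j => M x j ≠ M y j).card := by
      simpa [hammingDist] using hb x y hxy
    set B := T ∪ S.image (Function.Embedding.subtype fun j => j ∉ T) with hB
    have hBcard : B.card < b := by
      have h1 : B.card ≤ T.card + (S.image (Function.Embedding.subtype fun j => j ∉ T)).card :=
        card_union_le _ _
      have h2 : (S.image (Function.Embedding.subtype fun j => j ∉ T)).card = k := by
        rw [card_image_of_injective _ (Function.Embedding.subtype _).injective, hS]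
      omega
    have hne : ((univ.filter fun j => M x j ≠ M y j) \ B).Nonempty := by
      rw [← card_pos]
      have := card_le_card_sdiff_add_card (s := univ.filter fun j => M x j ≠ M y j) (t := B)
      omega
    obtain ⟨j, hj⟩ := hne
    rw [mem_sdiff, mem_filter, mem_union] at hj
    have hjT : j ∉ T := fun h => hj.2 (Or.inl h)
    refine ⟨⟨j, hjT⟩, fun hjS => hj.2 (Or.inr ?_), hj.1.2⟩
    exact mem_image.mpr ⟨⟨j, hjT⟩, hjS, rfl⟩
end

section
/- Let A_1 be an r×N array over Z_d whose rows are pairwise at Hamming distance at least (in fact exactly minimum) b, and let A_2 be a generalized Hadamard matrix D(λd, λd, d) over Z_d, i.e., a λd×λd matrix such that the difference of every pair of distinct columns contains each element of Z_d exactly λ times. Form A_1' = (m^T, A_1 ⊕ A_2), where A_1 ⊕ A_2 is the rλd × Nλd array whose block rows are (a_{i,j} + A_2) and where m is the column of length rλd whose entries cycle through 0,1,...,λd−1. Then the minimum Hamming distance of A_1' equals min{λ(d−1)N + 1, λd·b}. -/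
open Finset

/-- Columns of the array `A₁' = (mᵀ, A₁ ⊕ A₂)`: one extra first column plus an
`N × L` grid of columns. -/
abbrev GHCol (N L : ℕ) := Unit ⊕ (Fin N × Fin L)

/-- Alphabets: the first column takes values in `ZMod L` (`L = λd`), the others in `ZMod d`. -/
def GHAlph (N L d : ℕ) : GHCol N L → Type :=
  Sum.elim (fun _ => ZMod L) (fun _ => ZMod d)

instance (N L d : ℕ) : ∀ i : GHCol N L, DecidableEq (GHAlph N L d i)
  | Sum.inl _ => inferInstanceAs (DecidableEq (ZMod L))
  | Sum.inr _ => inferInstanceAs (DecidableEq (ZMod d))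

/-- The row of `A₁' = (mᵀ, A₁ ⊕ A₂)` indexed by `(i, t)`: the first entry is the
cycling symbol `t`, and entry `(j, s)` equals `A₁ i j + H t s`. -/
def ghRow {r N : ℕ} (L d : ℕ) (A1 : Fin r → Fin N → ZMod d)
    (H : Fin L → Fin L → ZMod d) (p : Fin r × Fin L) :
    ∀ i : GHCol N L, GHAlph N L d i
  | Sum.inl _ => ((p.2 : ℕ) : ZMod L)
  | Sum.inr js => A1 p.1 js.1 + H p.2 js.2

lemma ghDist_eq {r N L d : ℕ} (A1 : Fin r → Fin N → ZMod d)
    (H : Fin L → Fin L → ZMod d) (i i' : Fin r) (t t' : Fin L) :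
    hammingDist (ghRow L d A1 H (i, t)) (ghRow L d A1 H (i', t')) =
      (if ((t : ℕ) : ZMod L) ≠ ((t' : ℕ) : ZMod L) then 1 else 0) +
      ∑ j : Fin N, ((univ.filter fun s : Fin L => A1 i j + H t s ≠ A1 i' j + H t' s)).card := by
  rw [hammingDist, Finset.card_filter, Fintype.sum_sum_type]
  simp [ghRow, Finset.card_filter, Fintype.sum_prod_type]
  have hk : ∀ (p : Prop) (_ : Decidable (¬p)) (_ : Decidable p),
      (if ¬p then 1 else 0 : ℕ) = if p then 0 else 1 := by
    intro p _ _; by_cases hp : p <;> simp [hp]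
  exact congrArg₂ (· + ·) (hk _ _ _)
    (Finset.sum_congr rfl fun j _ => Finset.sum_congr rfl fun s _ => hk _ _ _)

/-- If `A₁` has minimum Hamming distance `b` and `H` is a generalized Hadamard
matrix `D(λd, λd, d)` over `Z_d`, then `A₁' = (mᵀ, A₁ ⊕ A₂)` has minimum Hamming
distance exactly `min (λ(d-1)N + 1) (λd·b)`. -/
theorem ghm_construction_minDist (r N d lam b : ℕ) (hd : 0 < d) (hlam : 0 < lam)
    (A1 : Fin r → Fin N → ZMod d)
    (H : Fin (lam * d) → Fin (lam * d) → ZMod d)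
    (hA1lb : ∀ x y : Fin r, x ≠ y → b ≤ hammingDist (A1 x) (A1 y))
    (hA1eq : ∃ x y : Fin r, x ≠ y ∧ hammingDist (A1 x) (A1 y) = b)
    (hH : ∀ i j : Fin (lam * d), i ≠ j → ∀ a : ZMod d,
      (univ.filter fun t => H i t - H j t = a).card = lam) :
    (∀ p q : Fin r × Fin (lam * d), p ≠ q →
      min (lam * (d - 1) * N + 1) (lam * d * b) ≤
        hammingDist (ghRow (lam * d) d A1 H p) (ghRow (lam * d) d A1 H q)) ∧
    (∃ p q : Fin r × Fin (lam * d), p ≠ q ∧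
      hammingDist (ghRow (lam * d) d A1 H p) (ghRow (lam * d) d A1 H q) =
        min (lam * (d - 1) * N + 1) (lam * d * b)) := by
  have hcast : ∀ t t' : Fin (lam * d), t ≠ t' →
      ((t : ℕ) : ZMod (lam * d)) ≠ ((t' : ℕ) : ZMod (lam * d)) := by
    intro t t' h hc
    apply h
    have := congrArg ZMod.val hc
    rw [ZMod.val_cast_of_lt t.2, ZMod.val_cast_of_lt t'.2] at this
    exact Fin.ext this
  -- count for distinct Hadamard rows
  have hne : ∀ (t t' : Fin (lam * d)), t ≠ t' → ∀ (c : ZMod d),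
      (univ.filter fun s => H t s - H t' s ≠ c).card = lam * (d - 1) := by
    intro t t' ht c
    rw [Finset.filter_not, Finset.card_sdiff_of_subset (Finset.filter_subset _ _), hH t t' ht c,
      Finset.card_univ, Fintype.card_fin]
    cases d with
    | zero => omega
    | succ d' =>
      have : lam * (d' + 1) = lam * d' + lam := Nat.mul_succ lam d'
      simp only [Nat.succ_sub_one]
      omega
  -- distance when the Hadamard rows differ
  have dist_ne : ∀ (i i' : Fin r) (t t' : Fin (lam * d)), t ≠ t' →
      hammingDist (ghRow (lam * d) d A1 H (i, t)) (ghRow (lam * d) d A1 H (i', t')) =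
        lam * (d - 1) * N + 1 := by
    intro i i' t t' ht
    rw [ghDist_eq, if_pos (hcast t t' ht)]
    have key : ∀ j : Fin N,
        ((univ.filter fun s : Fin (lam * d) => A1 i j + H t s ≠ A1 i' j + H t' s)).card
          = lam * (d - 1) := by
      intro j
      have hfil : (univ.filter fun s : Fin (lam * d) => A1 i j + H t s ≠ A1 i' j + H t' s)
          = (univ.filter fun s => H t s - H t' s ≠ A1 i' j - A1 i j) := by
        apply Finset.filter_congr
        intro s _
        constructor
        · intro h hc; exact h (by linear_combination hc)
        · intro h hc; exact h (by linear_combination hc)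
      rw [hfil, hne t t' ht]
    rw [Finset.sum_congr rfl fun j _ => key j, Finset.sum_const, Finset.card_univ,
      Fintype.card_fin, smul_eq_mul]
    ring
  -- distance when the Hadamard rows agree
  have dist_eq : ∀ (i i' : Fin r) (t : Fin (lam * d)),
      hammingDist (ghRow (lam * d) d A1 H (i, t)) (ghRow (lam * d) d A1 H (i', t)) =
        lam * d * hammingDist (A1 i) (A1 i') := by
    intro i i' t
    rw [ghDist_eq, if_neg (by simp)]
    have key : ∀ j : Fin N,
        ((univ.filter fun s : Fin (lam * d) => A1 i j + H t s ≠ A1 i' j + H t s)).card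
          = if A1 i j ≠ A1 i' j then lam * d else 0 := by
      intro j
      by_cases h : A1 i j = A1 i' j
      · simp [h]
      · simp [h, add_left_inj]
    rw [Finset.sum_congr rfl fun j _ => key j, hammingDist, Finset.card_filter,
      Finset.mul_sum, zero_add]
    congr 1
    funext j
    by_cases h : A1 i j = A1 i' j <;> simp [h]
  constructor
  · rintro ⟨i, t⟩ ⟨i', t'⟩ hpq
    by_cases ht : t = t'
    · subst ht
      have hi : i ≠ i' := fun h => hpq (by simp [h])
      rw [dist_eq]
      exact le_trans (min_le_right _ _) (Nat.mul_le_mul_left _ (hA1lb i i' hi))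
    · rw [dist_ne i i' t t' ht]
      exact min_le_left _ _
  · obtain ⟨x, y, hxy, hb⟩ := hA1eq
    by_cases hcase : lam * d * b ≤ lam * (d - 1) * N + 1
    · have hL0 : 0 < lam * d := Nat.mul_pos hlam hd
      refine ⟨(x, ⟨0, hL0⟩), (y, ⟨0, hL0⟩), fun h => hxy (congrArg Prod.fst h), ?_⟩
      rw [dist_eq, hb, min_eq_right hcase]
    · push_neg at hcase
      have hb1 : 1 ≤ b := by
        rcases Nat.eq_zero_or_pos b with h | h
        · subst h; simp at hcase
        · exact h
      have hd2 : 2 ≤ d := by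
        by_contra h
        push_neg at h
        have hd1 : d = 1 := by omega
        subst hd1
        have hAeq : A1 x = A1 y := funext fun j => Subsingleton.elim _ _
        rw [hAeq, hammingDist_self] at hb
        omega
      have hL2 : 2 ≤ lam * d := le_trans hd2 (Nat.le_mul_of_pos_left d hlam)
      refine ⟨(x, ⟨0, by omega⟩), (x, ⟨1, by omega⟩), ?_, ?_⟩
      · intro h
        have := congrArg (fun p => (p.2 : Fin (lam * d)).val) h
        simp at this
      · rw [dist_ne _ _ _ _ (by intro h; simpa using congrArg Fin.val h),
          min_eq_left (le_of_lt hcase)]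
end

section
/- Let M = (m_{i,j}) be an irredundant mixed orthogonal array IrMOA(r, d_1^{n_1}...d_ℓ^{n_ℓ}, k) with N columns. Then the pure state |ψ⟩ = (1/√r) Σ_{i=1}^r |m_{i,1}⟩⊗...⊗|m_{i,N}⟩ in (C^{d_1})^{⊗n_1} ⊗ ... ⊗ (C^{d_ℓ})^{⊗n_ℓ} is k-uniform: for every subset S of k of the N parties, the reduced density matrix tr_{S^c}|ψ⟩⟨ψ| equals the maximally mixed state (1/D_S) I, where D_S is the product of the local dimensions of the parties in S. -/
open Finset

/-- Entry `(a|_S, b|_S)` of the reduced density matrix of the pure state with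
computational-basis coefficients `ψ`, obtained by tracing out the parties
outside `S`. -/
noncomputable def reducedEntry {ι : Type} [Fintype ι] [DecidableEq ι]
    (d : ι → ℕ) (ψ : (∀ i, Fin (d i)) → ℂ) (S : Finset ι)
    (a b : ∀ i, Fin (d i)) : ℂ :=
  ∑ c : ∀ i : {i // i ∉ S}, Fin (d i.1),
    ψ (fun i => if h : i ∈ S then a i else c ⟨i, h⟩) *
      (starRingEnd ℂ) (ψ (fun i => if h : i ∈ S then b i else c ⟨i, h⟩))

/-- `ψ` is `k`-uniform: every reduction to `k` parties is maximally mixed. -/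
def IsKUniform {ι : Type} [Fintype ι] [DecidableEq ι]
    (d : ι → ℕ) (k : ℕ) (ψ : (∀ i, Fin (d i)) → ℂ) : Prop :=
  ∀ S : Finset ι, S.card = k → ∀ a b : ∀ i, Fin (d i),
    reducedEntry d ψ S a b =
      if ∀ i ∈ S, a i = b i then 1 / (∏ i ∈ S, (d i : ℂ)) else 0

lemma moa_count {r N k : ℕ} {d : Fin N → ℕ} {M : Fin r → ∀ j, Fin (d j)}
    (hM : IsMOA d k M) (S : Finset (Fin N)) (hS : S.card = k) (a : ∀ j, Fin (d j)) :
    (univ.filter fun i => ∀ j ∈ S, M i j = a j).card * ∏ j ∈ S, d j = r := by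
  classical
  set cols : Fin k ↪o Fin N := S.orderEmbOfFin hS with hcolsdef
  have hmem : ∀ s, cols s ∈ S := fun s => S.orderEmbOfFin_mem hS s
  have hsurj : ∀ j ∈ S, ∃ s, cols s = j := by
    intro j hj
    have h1 := S.range_orderEmbOfFin hS
    have h2 : j ∈ Set.range (S.orderEmbOfFin hS) := by rw [h1]; exact hj
    exact h2
  have hcond : ∀ (x : Fin r) (v : ∀ j, Fin (d j)),
      (∀ s, M x (cols.toEmbedding s) = v (cols.toEmbedding s)) ↔ (∀ j ∈ S, M x j = v j) := by
    intro x v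
    constructor
    · intro h j hj; obtain ⟨s, rfl⟩ := hsurj j hj; exact h s
    · intro h s; exact h _ (hmem s)
  have hmap : univ.map cols.toEmbedding = S := by
    ext j
    simp only [mem_map, mem_univ, true_and]
    constructor
    · rintro ⟨s, rfl⟩; exact hmem s
    · intro hj; exact hsurj j hj
  -- the partition identity
  have hpart : ∑ t : (∀ s : Fin k, Fin (d (cols.toEmbedding s))),
      (univ.filter fun x => ∀ s, M x (cols.toEmbedding s) = t s).card = r := by
    simp only [card_filter]
    rw [Finset.sum_comm]
    have hone : ∀ x : Fin r,
        (∑ t : (∀ s : Fin k, Fin (d (cols.toEmbedding s))),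
          if (∀ s, M x (cols.toEmbedding s) = t s) then 1 else 0 : ℕ) = 1 := by
      intro x
      have heq : ∀ t : (∀ s : Fin k, Fin (d (cols.toEmbedding s))),
          (∀ s, M x (cols.toEmbedding s) = t s) ↔ ((fun s => M x (cols.toEmbedding s)) = t) := by
        intro t; rw [funext_iff]
      simp only [heq]
      simp
    rw [Finset.sum_congr rfl fun x _ => hone x]
    simp
  set t0 : ∀ s : Fin k, Fin (d (cols.toEmbedding s)) := fun s => a (cols.toEmbedding s) with ht0
  have hconst : ∀ t : (∀ s : Fin k, Fin (d (cols.toEmbedding s))),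
      (univ.filter fun x => ∀ s, M x (cols.toEmbedding s) = t s).card =
      (univ.filter fun x => ∀ s, M x (cols.toEmbedding s) = t0 s).card :=
    fun t => hM cols.toEmbedding t t0
  have hcard : (univ.filter fun x => ∀ s, M x (cols.toEmbedding s) = t0 s).card =
      (univ.filter fun i => ∀ j ∈ S, M i j = a j).card := by
    congr 1
    apply Finset.filter_congr
    intro x _
    simpa [ht0] using hcond x a
  have hcardt : Fintype.card (∀ s : Fin k, Fin (d (cols.toEmbedding s))) = ∏ j ∈ S, d j := by
    rw [Fintype.card_pi]
    simp only [Fintype.card_fin]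
    rw [← hmap, Finset.prod_map]
  have h2 : ∑ t : (∀ s : Fin k, Fin (d (cols.toEmbedding s))),
      (univ.filter fun x => ∀ s, M x (cols.toEmbedding s) = t s).card =
      (∏ j ∈ S, d j) * (univ.filter fun i => ∀ j ∈ S, M i j = a j).card := by
    rw [Finset.sum_congr rfl (fun t _ => (hconst t).trans hcard), Finset.sum_const, smul_eq_mul]
    congr 1
  rw [mul_comm, ← h2]
  exact hpart

lemma key_sum {r N k : ℕ} {d : Fin N → ℕ} {M : Fin r → ∀ j, Fin (d j)}
    (hirr : IsIrredundant d k M) (S : Finset (Fin N)) (hS : S.card = k)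
    (a b : ∀ j, Fin (d j)) :
    (∑ c : ∀ i : {i // i ∉ S}, Fin (d i.1),
      (univ.filter fun i => M i = fun j => if h : j ∈ S then a j else c ⟨j, h⟩).card *
      (univ.filter fun i => M i = fun j => if h : j ∈ S then b j else c ⟨j, h⟩).card)
    = if ∀ j ∈ S, a j = b j then (univ.filter fun i => ∀ j ∈ S, M i j = a j).card else 0 := by
  classical
  have hsplit : ∀ (x : Fin r) (v : ∀ j, Fin (d j)) (c : ∀ i : {i // i ∉ S}, Fin (d i.1)),
      (M x = fun j => if h : j ∈ S then v j else c ⟨j, h⟩) ↔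
      ((∀ j ∈ S, M x j = v j) ∧ (fun j : {j // j ∉ S} => M x j.1) = c) := by
    intro x v c
    constructor
    · intro h
      refine ⟨fun j hj => ?_, funext fun j => ?_⟩
      · rw [h]; simp [hj]
      · rw [h]; simp [j.2]
    · rintro ⟨h1, h2⟩
      funext j
      by_cases hj : j ∈ S
      · simp [hj, h1 j hj]
      · simp only [hj, dif_neg, not_false_iff]
        rw [← h2]
  simp only [card_filter]
  rw [Finset.sum_congr rfl (fun c _ => Finset.sum_mul_sum _ _ _ _)]
  rw [Finset.sum_comm]
  rw [Finset.sum_congr rfl (fun x _ => Finset.sum_comm)]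
  have inner : ∀ x y : Fin r,
      (∑ c : ∀ i : {i // i ∉ S}, Fin (d i.1),
        (if M x = fun j => if h : j ∈ S then a j else c ⟨j, h⟩ then 1 else 0) *
        (if M y = fun j => if h : j ∈ S then b j else c ⟨j, h⟩ then 1 else 0) : ℕ)
      = if (∀ j ∈ S, M x j = a j) ∧ (∀ j ∈ S, M y j = b j) ∧
          (fun j : {j // j ∉ S} => M x j.1) = (fun j : {j // j ∉ S} => M y j.1)
        then 1 else 0 := by
    intro x y
    by_cases h : (∀ j ∈ S, M x j = a j) ∧ (∀ j ∈ S, M y j = b j) ∧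
        (fun j : {j // j ∉ S} => M x j.1) = (fun j : {j // j ∉ S} => M y j.1)
    · rw [if_pos h]
      obtain ⟨h1, h2, h3⟩ := h
      rw [Finset.sum_eq_single_of_mem (fun j : {j // j ∉ S} => M x j.1) (mem_univ _)]
      · rw [if_pos ((hsplit x a _).2 ⟨h1, rfl⟩), if_pos ((hsplit y b _).2 ⟨h2, h3.symm⟩)]
      · intro c _ hc
        rcases eq_or_ne (M x) (fun j => if h : j ∈ S then a j else c ⟨j, h⟩) with he | he
        · exact absurd ((hsplit x a c).1 he).2 (Ne.symm hc)
        · rw [if_neg he, zero_mul]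
    · rw [if_neg h]
      apply Finset.sum_eq_zero
      intro c _
      rcases eq_or_ne (M x) (fun j => if h : j ∈ S then a j else c ⟨j, h⟩) with he | he
      · rcases eq_or_ne (M y) (fun j => if h : j ∈ S then b j else c ⟨j, h⟩) with he' | he'
        · exact absurd ⟨((hsplit x a c).1 he).1, ((hsplit y b c).1 he').1,
            (((hsplit x a c).1 he).2).trans (((hsplit y b c).1 he').2).symm⟩ h
        · rw [if_neg he', mul_zero]
      · rw [if_neg he, zero_mul]
  rw [Finset.sum_congr rfl (fun x _ => Finset.sum_congr rfl (fun y _ => inner x y))]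
  have diag : ∀ x : Fin r,
      (∑ y : Fin r, if (∀ j ∈ S, M x j = a j) ∧ (∀ j ∈ S, M y j = b j) ∧
          (fun j : {j // j ∉ S} => M x j.1) = (fun j : {j // j ∉ S} => M y j.1)
        then 1 else 0 : ℕ)
      = if (∀ j ∈ S, M x j = a j) ∧ (∀ j ∈ S, M x j = b j) then 1 else 0 := by
    intro x
    rw [Finset.sum_eq_single_of_mem x (mem_univ _)]
    · by_cases h : (∀ j ∈ S, M x j = a j) ∧ (∀ j ∈ S, M x j = b j)
      · rw [if_pos ⟨h.1, h.2, rfl⟩, if_pos h]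
      · rw [if_neg, if_neg h]
        rintro ⟨h1, h2, _⟩; exact h ⟨h1, h2⟩
    · intro y _ hyx
      rw [if_neg]
      rintro ⟨_, _, h3⟩
      obtain ⟨j, hj, hne⟩ := hirr S hS x y (Ne.symm hyx)
      exact hne (congrFun h3 ⟨j, hj⟩)
  rw [Finset.sum_congr rfl (fun x _ => diag x)]
  by_cases hab : ∀ j ∈ S, a j = b j
  · rw [if_pos hab]
    apply Finset.sum_congr rfl
    intro x _
    congr 1
    simp only [eq_iff_iff]
    constructor
    · exact fun h => h.1
    · intro h
      exact ⟨h, fun j hj => (h j hj).trans (hab j hj)⟩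
  · rw [if_neg hab]
    apply Finset.sum_eq_zero
    intro x _
    rw [if_neg]
    rintro ⟨h1, h2⟩
    exact hab fun j hj => (h1 j hj).symm.trans (h2 j hj)

/-- An irredundant mixed orthogonal array of strength `k` yields the `k`-uniform
state `|ψ⟩ = (1/√r) ∑ᵢ |mᵢ₁ … mᵢ_N⟩`. -/
theorem irmoa_gives_kUniform {r N k : ℕ} (hr : 0 < r) (d : Fin N → ℕ)
    (M : Fin r → ∀ j, Fin (d j))
    (hM : IsMOA d k M) (hirr : IsIrredundant d k M) :
    IsKUniform d k
      (fun x => ((univ.filter fun i => M i = x).card : ℂ) / Real.sqrt r) := by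
  classical
  intro S hS a b
  have hrC : (r : ℂ) ≠ 0 := Nat.cast_ne_zero.mpr hr.ne'
  have hsqrt : ((Real.sqrt r : ℝ) : ℂ) * ((Real.sqrt r : ℝ) : ℂ) = (r : ℂ) := by
    rw [← Complex.ofReal_mul, Real.mul_self_sqrt (Nat.cast_nonneg r)]
    push_cast; ring
  unfold reducedEntry
  simp only [map_div₀, map_natCast, Complex.conj_ofReal]
  have hterm : ∀ c : ∀ i : {i // i ∉ S}, Fin (d i.1),
      (((univ.filter fun i => M i = fun j => if h : j ∈ S then a j else c ⟨j, h⟩).card : ℂ) /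
        (Real.sqrt r : ℝ)) *
      (((univ.filter fun i => M i = fun j => if h : j ∈ S then b j else c ⟨j, h⟩).card : ℂ) /
        (Real.sqrt r : ℝ))
      = (((univ.filter fun i => M i = fun j => if h : j ∈ S then a j else c ⟨j, h⟩).card *
          (univ.filter fun i => M i = fun j => if h : j ∈ S then b j else c ⟨j, h⟩).card : ℕ) : ℂ)
        / (r : ℂ) := by
    intro c
    rw [div_mul_div_comm, hsqrt]
    push_cast; ring
  rw [Finset.sum_congr rfl (fun c _ => hterm c), ← Finset.sum_div, ← Nat.cast_sum,
    key_sum hirr S hS a b]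
  by_cases hab : ∀ j ∈ S, a j = b j
  · rw [if_pos hab, if_pos hab]
    have hcount := moa_count hM S hS a
    have hprodne : (∏ j ∈ S, (d j : ℂ)) ≠ 0 := by
      have : (∏ j ∈ S, d j) ≠ 0 := by
        intro h0
        rw [h0, mul_zero] at hcount
        exact hr.ne' hcount.symm
      rw [← Nat.cast_prod]
      exact_mod_cast this
    field_simp
    rw [← Nat.cast_prod, ← Nat.cast_mul]
    exact_mod_cast hcount
  · rw [if_neg hab, if_neg hab, Nat.cast_zero, zero_div]
end

section
/- If there exists a k-uniform state in C^{d_1}⊗C^{d_2}⊗C^{d_3}⊗...⊗C^{d_N}, then there exists a (k−1)-uniform state in C^{d_1 d_2}⊗C^{d_3}⊗...⊗C^{d_N}; specifically, the same state viewed under the identification C^{d_1}⊗C^{d_2} ≅ C^{d_1 d_2} of the first two factors is (k−1)-uniform on the resulting N−1 parties. -/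
open Finset

/-- Dimensions of the original `N`-party system: two distinguished parties of
dimensions `d1`, `d2`, and `n` further parties of dimensions `e j`. -/
def dimsSplit {n : ℕ} (d1 d2 : ℕ) (e : Fin n → ℕ) : Fin 2 ⊕ Fin n → ℕ :=
  Sum.elim (fun b => if b = 0 then d1 else d2) e

/-- Dimensions after merging the first two parties into one party `C^{d1·d2}`. -/
def dimsMerged {n : ℕ} (d1 d2 : ℕ) (e : Fin n → ℕ) : Option (Fin n) → ℕ :=
  fun o => o.elim (d1 * d2) e

section Aux

variable {ι : Type} [Fintype ι] [DecidableEq ι] (d : ι → ℕ)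

/-- Split the complement of `S` into the value at `i0` plus the complement of
`insert i0 S`. -/
def pullEquiv (S : Finset ι) (i0 : ι) (h0 : i0 ∉ S) :
    (∀ i : {i // i ∉ S}, Fin (d i.1)) ≃
      Fin (d i0) × (∀ i : {i // i ∉ insert i0 S}, Fin (d i.1)) where
  toFun c := ⟨c ⟨i0, h0⟩, fun i => c ⟨i.1, fun hS => i.2 (mem_insert_of_mem hS)⟩⟩
  invFun vc i :=
    if hi : i.1 = i0 then finCongr (by rw [hi]) vc.1
    else vc.2 ⟨i.1, by simp [mem_insert, hi, i.2]⟩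
  left_inv c := by
    funext i
    obtain ⟨iv, hiv⟩ := i
    dsimp only
    split_ifs with hi
    · subst hi; rfl
    · rfl
  right_inv vc := by
    obtain ⟨v, c⟩ := vc
    refine Prod.ext ?_ ?_
    · simp
    · funext i
      obtain ⟨iv, hiv⟩ := i
      dsimp only
      rw [dif_neg (fun h => hiv (by simp [h]))]

lemma reducedEntry_insert (ψ : (∀ i, Fin (d i)) → ℂ) (S : Finset ι) (i0 : ι)
    (h0 : i0 ∉ S) (a b : ∀ i, Fin (d i)) :
    reducedEntry d ψ S a b = ∑ v : Fin (d i0),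
      reducedEntry d ψ (insert i0 S) (Function.update a i0 v)
        (Function.update b i0 v) := by
  unfold reducedEntry
  refine (Fintype.sum_equiv (pullEquiv d S i0 h0) _
      (fun p => ψ (fun i => if h : i ∈ insert i0 S then
            Function.update a i0 p.1 i else p.2 ⟨i, h⟩) *
        (starRingEnd ℂ) (ψ (fun i => if h : i ∈ insert i0 S then
            Function.update b i0 p.1 i else p.2 ⟨i, h⟩)))
      (fun c => ?_)).trans (Fintype.sum_prod_type _)
  have key : ∀ y : ∀ i, Fin (d i),
      (fun i => if h : i ∈ S then y i else c ⟨i, h⟩)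
        = (fun i => if h : i ∈ insert i0 S then
            Function.update y i0 ((pullEquiv d S i0 h0 c).1) i
          else (pullEquiv d S i0 h0 c).2 ⟨i, h⟩) := by
    intro y
    funext i
    by_cases hiS : i ∈ S
    · have hne : i ≠ i0 := fun h => h0 (h ▸ hiS)
      rw [dif_pos hiS, dif_pos (mem_insert_of_mem hiS),
        Function.update_of_ne hne]
    · by_cases hii0 : i = i0
      · subst hii0
        rw [dif_neg h0, dif_pos (mem_insert_self _ _), Function.update_self]
        rfl
      · rw [dif_neg hiS, dif_neg (by simp [mem_insert, hii0, hiS])]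
        rfl
  rw [key a, key b]

lemma uniform_drop {k : ℕ} {ψ : (∀ i, Fin (d i)) → ℂ} (hu : IsKUniform d k ψ)
    (S : Finset ι) (hS : S.card + 1 = k) (i0 : ι) (h0 : i0 ∉ S) (hd : d i0 ≠ 0)
    (a b : ∀ i, Fin (d i)) :
    reducedEntry d ψ S a b =
      if ∀ i ∈ S, a i = b i then 1 / ∏ i ∈ S, (d i : ℂ) else 0 := by
  rw [reducedEntry_insert d ψ S i0 h0 a b]
  have hcard : (insert i0 S).card = k := by
    rw [card_insert_of_notMem h0]; omega
  have hcond : ∀ v : Fin (d i0),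
      (∀ i ∈ insert i0 S, Function.update a i0 v i = Function.update b i0 v i) ↔
        ∀ i ∈ S, a i = b i := by
    intro v
    constructor
    · intro H i hi
      have := H i (mem_insert_of_mem hi)
      rwa [Function.update_of_ne (fun h : _ = i0 => h0 (h ▸ hi)),
        Function.update_of_ne (fun h : _ = i0 => h0 (h ▸ hi))] at this
    · intro H i hi
      rcases mem_insert.1 hi with rfl | hi
      · simp
      · rw [Function.update_of_ne (fun h : _ = i0 => h0 (h ▸ hi)),
          Function.update_of_ne (fun h : _ = i0 => h0 (h ▸ hi))]
        exact H i hi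
  simp only [hu _ hcard, hcond]
  by_cases hab : ∀ i ∈ S, a i = b i
  · simp only [if_pos hab, sum_const, card_univ, Fintype.card_fin, prod_insert h0,
      nsmul_eq_mul]
    rw [one_div, mul_inv, ← mul_assoc,
      mul_inv_cancel₀ (by exact_mod_cast hd), one_mul, one_div]
  · simp [hab]

end Aux

section Merge

variable {n : ℕ} (d1 d2 : ℕ) (e : Fin n → ℕ)

/-- `Fin (d1 * d2)` as the pair of the first two parties. -/
def pairEquiv : Fin (d1 * d2) ≃ ∀ b : Fin 2, Fin (dimsSplit d1 d2 e (Sum.inl b)) :=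
  finProdFinEquiv.symm.trans
    (piFinTwoEquiv fun b => Fin (dimsSplit d1 d2 e (Sum.inl b))).symm

/-- Configurations of the merged system correspond to configurations of the
split system. -/
def mergeEquiv : (∀ o, Fin (dimsMerged d1 d2 e o)) ≃ (∀ i, Fin (dimsSplit d1 d2 e i)) :=
  (Equiv.piOptionEquivProd).trans <|
    ((pairEquiv d1 d2 e).prodCongr (Equiv.refl (∀ j : Fin n, Fin (e j)))).trans
      (Equiv.sumPiEquivProdPi fun i => Fin (dimsSplit d1 d2 e i)).symm

lemma mergeEquiv_inl (x : ∀ o, Fin (dimsMerged d1 d2 e o)) (b : Fin 2) :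
    mergeEquiv d1 d2 e x (Sum.inl b) = pairEquiv d1 d2 e (x none) b := rfl

lemma mergeEquiv_inr (x : ∀ o, Fin (dimsMerged d1 d2 e o)) (j : Fin n) :
    mergeEquiv d1 d2 e x (Sum.inr j) = x (some j) := rfl

lemma pairEquiv_zero (q : Fin (d1 * d2)) :
    pairEquiv d1 d2 e q 0 = (finProdFinEquiv.symm q).1 := rfl

lemma pairEquiv_one (q : Fin (d1 * d2)) :
    pairEquiv d1 d2 e q 1 = (finProdFinEquiv.symm q).2 := rfl

end Merge

section Sets

variable {n : ℕ}

/-- The split-system set of parties corresponding to a merged-system set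
containing the merged party. -/
def splitSetA (S : Finset (Option (Fin n))) : Finset (Fin 2 ⊕ Fin n) :=
  insert (Sum.inl 0) (insert (Sum.inl 1)
    ((eraseNone S).map ⟨Sum.inr, Sum.inr_injective⟩))

/-- The split-system set of parties corresponding to a merged-system set
not containing the merged party. -/
def splitSetB (S : Finset (Option (Fin n))) : Finset (Fin 2 ⊕ Fin n) :=
  (eraseNone S).map ⟨Sum.inr, Sum.inr_injective⟩

@[simp] lemma mem_splitSetB_inr {S : Finset (Option (Fin n))} {j : Fin n} :
    Sum.inr j ∈ splitSetB S ↔ some j ∈ S := by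
  simp [splitSetB, mem_eraseNone]

@[simp] lemma inl_not_mem_splitSetB {S : Finset (Option (Fin n))} (b : Fin 2) :
    Sum.inl b ∉ splitSetB S := by
  simp [splitSetB]

@[simp] lemma mem_splitSetA_inr {S : Finset (Option (Fin n))} {j : Fin n} :
    Sum.inr j ∈ splitSetA S ↔ some j ∈ S := by
  simp [splitSetA, mem_eraseNone]

@[simp] lemma mem_splitSetA_inl {S : Finset (Option (Fin n))} (b : Fin 2) :
    Sum.inl b ∈ splitSetA S := by
  fin_cases b <;> simp [splitSetA]

lemma card_eraseNone' (S : Finset (Option (Fin n))) :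
    (eraseNone S).card = (S.erase none).card := by
  rw [← map_some_eraseNone S, card_map]

end Sets

section Cases

variable {n : ℕ} (d1 d2 : ℕ) (e : Fin n → ℕ)

/-- Complement reindexing when the merged party is inside `S`. -/
def eqvA (S : Finset (Option (Fin n))) (hS : none ∈ S) :
    (∀ o : {o : Option (Fin n) // o ∉ S}, Fin (dimsMerged d1 d2 e o.1)) ≃
      (∀ i : {i : Fin 2 ⊕ Fin n // i ∉ splitSetA S}, Fin (dimsSplit d1 d2 e i.1)) where
  toFun c i :=
    match i with
    | ⟨Sum.inl b, hb⟩ => (hb (mem_splitSetA_inl b)).elim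
    | ⟨Sum.inr j, hj⟩ => c ⟨some j, fun h => hj (mem_splitSetA_inr.2 h)⟩
  invFun c o :=
    match o with
    | ⟨none, h⟩ => (h hS).elim
    | ⟨some j, h⟩ => c ⟨Sum.inr j, fun hm => h (mem_splitSetA_inr.1 hm)⟩
  left_inv c := by
    funext o
    obtain ⟨o, ho⟩ := o
    cases o with
    | none => exact absurd hS ho
    | some j => rfl
  right_inv c := by
    funext i
    obtain ⟨i, hi⟩ := i
    cases i with
    | inl b => exact absurd (mem_splitSetA_inl b) hi
    | inr j => rfl

/-- Complement reindexing when the merged party is outside `S`. -/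
def eqvB (S : Finset (Option (Fin n))) (hS : none ∉ S) :
    (∀ o : {o : Option (Fin n) // o ∉ S}, Fin (dimsMerged d1 d2 e o.1)) ≃
      (∀ i : {i : Fin 2 ⊕ Fin n // i ∉ splitSetB S}, Fin (dimsSplit d1 d2 e i.1)) where
  toFun c i :=
    match i with
    | ⟨Sum.inl b, _⟩ => pairEquiv d1 d2 e (c ⟨none, hS⟩) b
    | ⟨Sum.inr j, hj⟩ => c ⟨some j, fun h => hj (mem_splitSetB_inr.2 h)⟩
  invFun c o :=
    match o with
    | ⟨none, _⟩ =>
        finProdFinEquiv (c ⟨Sum.inl 0, inl_not_mem_splitSetB 0⟩,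
          c ⟨Sum.inl 1, inl_not_mem_splitSetB 1⟩)
    | ⟨some j, h⟩ => c ⟨Sum.inr j, fun hm => h (mem_splitSetB_inr.1 hm)⟩
  left_inv c := by
    funext o
    obtain ⟨o, ho⟩ := o
    cases o with
    | none =>
      show finProdFinEquiv
          (pairEquiv d1 d2 e (c ⟨none, hS⟩) 0, pairEquiv d1 d2 e (c ⟨none, hS⟩) 1)
        = c ⟨none, ho⟩
      exact Equiv.apply_symm_apply finProdFinEquiv (c ⟨none, hS⟩)
    | some j => rfl
  right_inv c := by
    funext i
    obtain ⟨i, hi⟩ := i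
    cases i with
    | inl b =>
      fin_cases b
      · show pairEquiv d1 d2 e (finProdFinEquiv _) 0 = _
        rw [pairEquiv_zero, Equiv.symm_apply_apply]
        rfl
      · show pairEquiv d1 d2 e (finProdFinEquiv _) 1 = _
        rw [pairEquiv_one, Equiv.symm_apply_apply]
        rfl
    | inr j => rfl

end Cases

section CaseLemmas

variable {n : ℕ} (d1 d2 : ℕ) (e : Fin n → ℕ)

lemma reducedEntry_caseA (ψ : (∀ i, Fin (dimsSplit d1 d2 e i)) → ℂ)
    (S : Finset (Option (Fin n))) (hS : none ∈ S)
    (a b : ∀ o, Fin (dimsMerged d1 d2 e o)) :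
    reducedEntry (dimsMerged d1 d2 e) (fun x => ψ (mergeEquiv d1 d2 e x)) S a b
      = reducedEntry (dimsSplit d1 d2 e) ψ (splitSetA S)
          (mergeEquiv d1 d2 e a) (mergeEquiv d1 d2 e b) := by
  unfold reducedEntry
  refine Fintype.sum_equiv (eqvA d1 d2 e S hS) _ _ fun c => ?_
  have key : ∀ y : ∀ o, Fin (dimsMerged d1 d2 e o),
      mergeEquiv d1 d2 e (fun o => if h : o ∈ S then y o else c ⟨o, h⟩)
        = fun i => if h : i ∈ splitSetA S then mergeEquiv d1 d2 e y i
            else eqvA d1 d2 e S hS c ⟨i, h⟩ := by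
    intro y
    funext i
    cases i with
    | inl b =>
      rw [dif_pos (mem_splitSetA_inl b), mergeEquiv_inl, mergeEquiv_inl,
        dif_pos hS]
    | inr j =>
      rw [mergeEquiv_inr]
      by_cases hj : some j ∈ S
      · rw [dif_pos hj, dif_pos (mem_splitSetA_inr.2 hj), mergeEquiv_inr]
      · rw [dif_neg hj, dif_neg (fun hm => hj (mem_splitSetA_inr.1 hm))]
        rfl
  simp only [key a, key b]

lemma reducedEntry_caseB (ψ : (∀ i, Fin (dimsSplit d1 d2 e i)) → ℂ)
    (S : Finset (Option (Fin n))) (hS : none ∉ S)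
    (a b : ∀ o, Fin (dimsMerged d1 d2 e o)) :
    reducedEntry (dimsMerged d1 d2 e) (fun x => ψ (mergeEquiv d1 d2 e x)) S a b
      = reducedEntry (dimsSplit d1 d2 e) ψ (splitSetB S)
          (mergeEquiv d1 d2 e a) (mergeEquiv d1 d2 e b) := by
  unfold reducedEntry
  refine Fintype.sum_equiv (eqvB d1 d2 e S hS) _ _ fun c => ?_
  have key : ∀ y : ∀ o, Fin (dimsMerged d1 d2 e o),
      mergeEquiv d1 d2 e (fun o => if h : o ∈ S then y o else c ⟨o, h⟩)
        = fun i => if h : i ∈ splitSetB S then mergeEquiv d1 d2 e y i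
            else eqvB d1 d2 e S hS c ⟨i, h⟩ := by
    intro y
    funext i
    cases i with
    | inl b =>
      rw [dif_neg (inl_not_mem_splitSetB b), mergeEquiv_inl, dif_neg hS]
      rfl
    | inr j =>
      rw [mergeEquiv_inr]
      by_cases hj : some j ∈ S
      · rw [dif_pos hj, dif_pos (mem_splitSetB_inr.2 hj), mergeEquiv_inr]
      · rw [dif_neg hj, dif_neg (fun hm => hj (mem_splitSetB_inr.1 hm))]
        rfl
  simp only [key a, key b]

end CaseLemmas


/-- If a `k`-uniform state exists on `C^{d1} ⊗ C^{d2} ⊗ C^{e 0} ⊗ ⋯`, then a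
`(k-1)`-uniform state exists on the merged system `C^{d1·d2} ⊗ C^{e 0} ⊗ ⋯`. -/
theorem merge_two_parties_kUniform {n k : ℕ} (d1 d2 : ℕ) (e : Fin n → ℕ)
    (hk : 1 ≤ k)
    (h : ∃ ψ : (∀ i, Fin (dimsSplit d1 d2 e i)) → ℂ,
      (∑ x, ‖ψ x‖ ^ 2 = 1) ∧ IsKUniform (dimsSplit d1 d2 e) k ψ) :
    ∃ φ : (∀ o, Fin (dimsMerged d1 d2 e o)) → ℂ,
      (∑ x, ‖φ x‖ ^ 2 = 1) ∧ IsKUniform (dimsMerged d1 d2 e) (k - 1) φ := by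
  obtain ⟨ψ, hnorm, hunif⟩ := h
  have hd1 : d1 ≠ 0 := by
    intro hd
    have hempty : IsEmpty (∀ i, Fin (dimsSplit d1 d2 e i)) := by
      refine ⟨fun f => ?_⟩
      have v : Fin d1 := f (Sum.inl 0)
      rw [hd] at v
      exact v.elim0
    rw [univ_eq_empty, sum_empty] at hnorm
    exact one_ne_zero hnorm.symm
  refine ⟨fun x => ψ (mergeEquiv d1 d2 e x), ?_, ?_⟩
  · rw [← hnorm]
    exact Equiv.sum_comp (mergeEquiv d1 d2 e) (fun y => ‖ψ y‖ ^ 2)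
  · intro S hScard a b
    have hcardErase : (eraseNone S).card = (S.erase none).card := card_eraseNone' S
    by_cases hnS : none ∈ S
    · -- the merged party belongs to `S`
      have hk2 : 1 ≤ S.card := card_pos.2 ⟨none, hnS⟩
      have hcardA : (splitSetA S).card = k := by
        rw [splitSetA, card_insert_of_notMem (by simp), card_insert_of_notMem (by simp),
          card_map, hcardErase, card_erase_of_mem hnS, hScard]
        omega
      rw [reducedEntry_caseA d1 d2 e ψ S hnS a b, hunif _ hcardA]
      have hiff : (∀ i ∈ splitSetA S,
            mergeEquiv d1 d2 e a i = mergeEquiv d1 d2 e b i)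
          ↔ ∀ o ∈ S, a o = b o := by
        constructor
        · intro H o ho
          cases o with
          | none =>
            have H0 := H (Sum.inl 0) (mem_splitSetA_inl 0)
            have H1 := H (Sum.inl 1) (mem_splitSetA_inl 1)
            rw [mergeEquiv_inl, mergeEquiv_inl] at H0 H1
            refine (pairEquiv d1 d2 e).injective ?_
            funext bb
            fin_cases bb
            · exact H0
            · exact H1
          | some j =>
            have := H (Sum.inr j) (mem_splitSetA_inr.2 ho)
            rwa [mergeEquiv_inr, mergeEquiv_inr] at this
        · intro H i hi
          cases i with
          | inl b' => rw [mergeEquiv_inl, mergeEquiv_inl, H none hnS]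
          | inr j =>
            rw [mergeEquiv_inr, mergeEquiv_inr, H (some j) (mem_splitSetA_inr.1 hi)]
      have hprod : (∏ i ∈ splitSetA S, (dimsSplit d1 d2 e i : ℂ))
          = ∏ o ∈ S, (dimsMerged d1 d2 e o : ℂ) := by
        conv_rhs => rw [← insert_erase hnS]
        rw [prod_insert (notMem_erase _ _), ← map_some_eraseNone S, prod_map,
          splitSetA, prod_insert (by simp), prod_insert (by simp), prod_map]
        simp only [Function.comp, Function.Embedding.coeFn_mk,
          Function.Embedding.some_apply,
          show dimsSplit d1 d2 e (Sum.inl 0) = d1 from rfl,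
          show dimsSplit d1 d2 e (Sum.inl 1) = d2 from rfl,
          show dimsMerged d1 d2 e none = d1 * d2 from rfl,
          show ∀ j : Fin n, dimsSplit d1 d2 e (Sum.inr j) = e j from fun _ => rfl,
          show ∀ j : Fin n, dimsMerged d1 d2 e (some j) = e j from fun _ => rfl,
          Nat.cast_mul]
        ring
      exact if_congr hiff (by rw [hprod]) rfl
    · -- the merged party is outside `S`
      have hcardB : (splitSetB S).card + 1 = k := by
        rw [splitSetB, card_map, hcardErase, erase_eq_of_notMem hnS, hScard]
        omega
      rw [reducedEntry_caseB d1 d2 e ψ S hnS a b,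
        uniform_drop (dimsSplit d1 d2 e) hunif (splitSetB S) hcardB (Sum.inl 0)
          (inl_not_mem_splitSetB 0) hd1 _ _]
      have hiff : (∀ i ∈ splitSetB S,
            mergeEquiv d1 d2 e a i = mergeEquiv d1 d2 e b i)
          ↔ ∀ o ∈ S, a o = b o := by
        constructor
        · intro H o ho
          cases o with
          | none => exact absurd ho hnS
          | some j =>
            have := H (Sum.inr j) (mem_splitSetB_inr.2 ho)
            rwa [mergeEquiv_inr, mergeEquiv_inr] at this
        · intro H i hi
          cases i with
          | inl b' => exact absurd hi (inl_not_mem_splitSetB b')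
          | inr j =>
            rw [mergeEquiv_inr, mergeEquiv_inr, H (some j) (mem_splitSetB_inr.1 hi)]
      have hprod : (∏ i ∈ splitSetB S, (dimsSplit d1 d2 e i : ℂ))
          = ∏ o ∈ S, (dimsMerged d1 d2 e o : ℂ) := by
        conv_rhs => rw [show S = S.erase none from (erase_eq_of_notMem hnS).symm,
          ← map_some_eraseNone S]
        rw [splitSetB, prod_map, prod_map]
        exact Finset.prod_congr rfl fun j _ => rfl
      exact if_congr hiff (by rw [hprod]) rfl
end

section
/- There is no absolutely maximally entangled state in C^3 ⊗ (C^2)^{⊗8}, i.e., no pure state of these 9 parties such that every reduction to 4 parties is maximally mixed. Concretely, with A_0' = 1, A_1' = 13/3, A_2' = 25/3, A_3' = 28/3, A_4' = 161/24 and A_j' = A_{9−j}' for 5 ≤ j ≤ 9, the shadow coefficient S_1 = Σ_{k=0}^9 K_8(k;9) A_k' equals −23/12 < 0, violating the shadow inequality S_1 ≥ 0 required for the existence of such a state. -/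
open Finset

/-- Local dimensions of `C³ ⊗ (C²)^{⊗8}`. -/
def dims9 : Fin 9 → ℕ := fun i => if i = 0 then 3 else 2

set_option linter.unusedSectionVars false

namespace AMEAux
section
variable {ι : Type} [Fintype ι] [DecidableEq ι] (d : ι → ℕ)

/-- mix: coordinates in `T` from `x`, others from `y`. -/
def mix (T : Finset ι) (x y : ∀ i, Fin (d i)) : ∀ i, Fin (d i) :=
  fun i => if i ∈ T then x i else y i

/-- the swap-on-`T` involution on pairs. -/
def mPair (T : Finset ι) (p : (∀ i, Fin (d i)) × (∀ i, Fin (d i))) :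
    (∀ i, Fin (d i)) × (∀ i, Fin (d i)) :=
  (mix d T p.2 p.1, mix d T p.1 p.2)

def Phi (ψ : (∀ i, Fin (d i)) → ℂ) (p : (∀ i, Fin (d i)) × (∀ i, Fin (d i))) : ℂ :=
  ψ p.1 * ψ p.2

/-- purity-type quantity `Tr((ρ_T)²) = ⟨ψ⊗ψ, F_T ψ⊗ψ⟩`. -/
noncomputable def pT (ψ : (∀ i, Fin (d i)) → ℂ) (T : Finset ι) : ℂ :=
  ∑ p : (∀ i, Fin (d i)) × (∀ i, Fin (d i)),
    (starRingEnd ℂ) (Phi d ψ p) * Phi d ψ (mPair d T p)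

lemma mPair_mPair (T T' : Finset ι) (p) :
    mPair d T (mPair d T' p) = mPair d (symmDiff T T') p := by
  obtain ⟨x, y⟩ := p
  unfold mPair mix
  refine Prod.ext (funext fun i => ?_) (funext fun i => ?_) <;>
    · by_cases h1 : i ∈ T <;> by_cases h2 : i ∈ T' <;>
        simp [h1, h2, Finset.mem_symmDiff]

lemma mPair_empty (p) : mPair d (∅ : Finset ι) p = p := by
  obtain ⟨x, y⟩ := p
  unfold mPair mix
  simp

lemma mPair_involutive (T : Finset ι) : Function.Involutive (mPair d T) := by
  intro p
  rw [mPair_mPair, symmDiff_self]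
  exact mPair_empty d p

lemma sum_mPair_reindex (T : Finset ι) (f : _ → ℂ) :
    (∑ p : (∀ i, Fin (d i)) × (∀ i, Fin (d i)), f (mPair d T p)) = ∑ p, f p :=
  Function.Bijective.sum_comp (mPair_involutive d T).bijective f

lemma sigma_symmDiff (s : ι → ℂ) (hs : ∀ i, s i = 1 ∨ s i = -1) (A B : Finset ι) :
    (∏ i ∈ A, s i) * ∏ i ∈ B, s i = ∏ i ∈ symmDiff A B, s i := by
  have hsq : ∀ i ∈ A ∩ B, s i * s i = 1 := by
    intro i _
    rcases hs i with h | h <;> rw [h] <;> ring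
  have h1 : (∏ i ∈ A ∪ B, s i) * ∏ i ∈ A ∩ B, s i = (∏ i ∈ A, s i) * ∏ i ∈ B, s i :=
    Finset.prod_union_inter
  have h2 : (∏ i ∈ symmDiff A B, s i) * ∏ i ∈ A ∩ B, s i = ∏ i ∈ A ∪ B, s i := by
    have hdisj : Disjoint (symmDiff A B) (A ∩ B) := by
      simpa [inf_eq_inter] using disjoint_symmDiff_inf A B
    rw [← Finset.prod_union hdisj]
    congr 1
    have := symmDiff_sup_inf A B
    simpa [sup_eq_union, inf_eq_inter] using this
  calc (∏ i ∈ A, s i) * ∏ i ∈ B, s i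
      = ((∏ i ∈ symmDiff A B, s i) * ∏ i ∈ A ∩ B, s i) * ∏ i ∈ A ∩ B, s i := by rw [h2, h1]
    _ = (∏ i ∈ symmDiff A B, s i) * ∏ i ∈ A ∩ B, (s i * s i) := by
        rw [Finset.prod_mul_distrib]; ring
    _ = ∏ i ∈ symmDiff A B, s i := by rw [Finset.prod_congr rfl hsq]; simp

lemma pos_core (ψ : (∀ i, Fin (d i)) → ℂ) (s : ι → ℂ) (hs : ∀ i, s i = 1 ∨ s i = -1) :
    ∃ r : ℝ, 0 ≤ r ∧
      (2 ^ Fintype.card ι : ℂ) * ∑ T : Finset ι, (∏ i ∈ T, s i) * pT d ψ T = (r : ℂ) := by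
  classical
  set σ : Finset ι → ℂ := fun T => ∏ i ∈ T, s i with hσ
  set w : ((∀ i, Fin (d i)) × (∀ i, Fin (d i))) → ℂ :=
    fun p => ∑ T : Finset ι, σ T * Phi d ψ (mPair d T p) with hw
  refine ⟨∑ p, Complex.normSq (w p), Finset.sum_nonneg fun p _ => Complex.normSq_nonneg _, ?_⟩
  have hconjσ : ∀ T : Finset ι, (starRingEnd ℂ) (σ T) = σ T := by
    intro T
    rw [hσ, map_prod]
    exact Finset.prod_congr rfl fun i _ => by rcases hs i with h | h <;> simp [h]
  -- step 1: cast
  have step1 : ((∑ p, Complex.normSq (w p) : ℝ) : ℂ)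
      = ∑ p, (starRingEnd ℂ) (w p) * w p := by
    push_cast
    exact Finset.sum_congr rfl fun p _ => (Complex.normSq_eq_conj_mul_self (z := w p))
  rw [step1]
  -- step 2: expand
  have hreidx : ∀ T T' : Finset ι,
      (∑ p, (starRingEnd ℂ) (Phi d ψ (mPair d T p)) * Phi d ψ (mPair d T' p))
        = pT d ψ (symmDiff T' T) := by
    intro T T'
    have h := sum_mPair_reindex d T
      (fun p => (starRingEnd ℂ) (Phi d ψ p) * Phi d ψ (mPair d (symmDiff T' T) p))
    simp only [pT]
    rw [← h]
    refine Finset.sum_congr rfl fun p _ => ?_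
    rw [mPair_mPair]
    congr 3
    exact (symmDiff_symmDiff_cancel_right T T').symm
  have step2 : (∑ p, (starRingEnd ℂ) (w p) * w p)
      = ∑ T : Finset ι, ∑ T' : Finset ι, σ T * σ T' * pT d ψ (symmDiff T' T) := by
    have expand : ∀ p, (starRingEnd ℂ) (w p) * w p
        = ∑ T : Finset ι, ∑ T' : Finset ι,
            σ T * σ T' * ((starRingEnd ℂ) (Phi d ψ (mPair d T p)) * Phi d ψ (mPair d T' p)) := by
      intro p
      rw [hw]
      simp only [map_sum, map_mul, hconjσ]
      rw [Finset.sum_mul_sum]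
      exact Finset.sum_congr rfl fun T _ => Finset.sum_congr rfl fun T' _ => by ring
    rw [Finset.sum_congr rfl fun p _ => expand p]
    rw [Finset.sum_comm]
    refine Finset.sum_congr rfl fun T _ => ?_
    rw [Finset.sum_comm]
    refine Finset.sum_congr rfl fun T' _ => ?_
    rw [← Finset.mul_sum, hreidx]
  rw [step2]
  -- step 3: inner reindex T' ↦ symmDiff T' T
  have step3 : ∀ T : Finset ι,
      (∑ T' : Finset ι, σ T * σ T' * pT d ψ (symmDiff T' T))
        = ∑ U : Finset ι, σ U * pT d ψ U := by
    intro T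
    have hbij : Function.Bijective (fun U : Finset ι => symmDiff U T) :=
      Function.Involutive.bijective fun U => symmDiff_symmDiff_cancel_right T U
    rw [← Function.Bijective.sum_comp hbij (fun T' => σ T * σ T' * pT d ψ (symmDiff T' T))]
    refine Finset.sum_congr rfl fun U _ => ?_
    have e1 : symmDiff (symmDiff U T) T = U := symmDiff_symmDiff_cancel_right T U
    have e2 : σ T * σ (symmDiff U T) = σ U := by
      rw [hσ]
      dsimp only
      rw [sigma_symmDiff s hs T (symmDiff U T), symmDiff_comm U T,
        symmDiff_symmDiff_cancel_left]
    rw [e1, e2]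
  rw [Finset.sum_congr rfl fun T _ => step3 T, Finset.sum_const, Finset.card_univ,
    Fintype.card_finset, nsmul_eq_mul]
  push_cast
  ring

lemma pT_compl (ψ : (∀ i, Fin (d i)) → ℂ) (T : Finset ι) :
    pT d ψ Tᶜ = pT d ψ T := by
  unfold pT
  refine Finset.sum_congr rfl fun p _ => ?_
  have h : Phi d ψ (mPair d Tᶜ p) = Phi d ψ (mPair d T p) := by
    have h1 : mix d Tᶜ p.2 p.1 = mix d T p.1 p.2 := by
      funext i; by_cases h : i ∈ T <;> simp [mix, h]
    have h2 : mix d Tᶜ p.1 p.2 = mix d T p.2 p.1 := by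
      funext i; by_cases h : i ∈ T <;> simp [mix, h]
    unfold Phi mPair
    rw [h1, h2]
    ring
  rw [h]

lemma pT_of_uniform (ψ : (∀ i, Fin (d i)) → ℂ) (hd : ∀ i, 0 < d i) (T : Finset ι)
    (hU : IsKUniform d T.card ψ) :
    pT d ψ T = (∏ i ∈ T, (d i : ℂ))⁻¹ := by
  classical
  set E := (Equiv.piEquivPiSubtypeProd (fun i => i ∈ T) (fun i => Fin (d i))).symm with hE
  set g : (∀ i : {i // i ∈ T}, Fin (d i.1)) → (∀ i : {i // i ∈ T}, Fin (d i.1)) → ℂ :=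
    fun a b => ∑ c : ∀ i : {i // ¬ i ∈ T}, Fin (d i.1),
      ψ (E (a, c)) * (starRingEnd ℂ) (ψ (E (b, c))) with hg
  -- mix identity
  have hmix : ∀ (a b : ∀ i : {i // i ∈ T}, Fin (d i.1))
      (c e : ∀ i : {i // ¬ i ∈ T}, Fin (d i.1)),
      mix d T (E (b, e)) (E (a, c)) = E (b, c) := by
    intro a b c e
    funext i
    by_cases h : i ∈ T <;>
      simp [mix, h, hE, Equiv.piEquivPiSubtypeProd_symm_apply]
  -- step A : pT as double sum over subtype parts
  have stepA : pT d ψ T = ∑ a, ∑ b, g b a * g a b := by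
    unfold pT
    rw [← Equiv.sum_comp (Equiv.prodCongr E E)
      (fun p => (starRingEnd ℂ) (Phi d ψ p) * Phi d ψ (mPair d T p))]
    simp only [Fintype.sum_prod_type]
    refine Finset.sum_congr rfl fun a _ => ?_
    rw [Finset.sum_comm]
    refine Finset.sum_congr rfl fun b _ => ?_
    rw [hg]
    dsimp only
    rw [Finset.sum_mul_sum]
    refine Finset.sum_congr rfl fun c _ => ?_
    refine Finset.sum_congr rfl fun e _ => ?_
    simp only [Equiv.prodCongr_apply, Prod.map, Phi, mPair, map_mul]
    rw [hmix a b c e, hmix b a e c]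
    ring
  -- step B : g is diagonal
  have c0 : ∀ i : {i // ¬ i ∈ T}, Fin (d i.1) := fun i => ⟨0, hd i.1⟩
  have stepB : ∀ a b, g a b = if a = b then (∏ i ∈ T, (d i : ℂ))⁻¹ else 0 := by
    intro a b
    have hre : reducedEntry d ψ T (E (a, c0)) (E (b, c0)) = g a b := by
      unfold reducedEntry
      refine Finset.sum_congr rfl fun c _ => ?_
      have h1 : (fun i => if h : i ∈ T then (E (a, c0)) i else c ⟨i, h⟩) = E (a, c) := by
        funext i
        by_cases h : i ∈ T <;>
          simp [h, hE, Equiv.piEquivPiSubtypeProd_symm_apply]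
      have h2 : (fun i => if h : i ∈ T then (E (b, c0)) i else c ⟨i, h⟩) = E (b, c) := by
        funext i
        by_cases h : i ∈ T <;>
          simp [h, hE, Equiv.piEquivPiSubtypeProd_symm_apply]
      rw [h1, h2]
    have := hU T rfl (E (a, c0)) (E (b, c0))
    rw [hre] at this
    rw [this]
    have hcond : (∀ i ∈ T, (E (a, c0)) i = (E (b, c0)) i) ↔ a = b := by
      constructor
      · intro h
        funext i
        have := h i.1 i.2
        simpa [hE, Equiv.piEquivPiSubtypeProd_symm_apply, i.2] using this
      · rintro rfl
        intro i _
        rfl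
    simp only [hcond, one_div]
  -- step C : evaluate
  rw [stepA]
  have : ∀ a, ∑ b, g b a * g a b
      = (∏ i ∈ T, (d i : ℂ))⁻¹ * (∏ i ∈ T, (d i : ℂ))⁻¹ := by
    intro a
    rw [Finset.sum_congr rfl fun b _ => by rw [stepB b a, stepB a b]]
    simp [Finset.sum_ite_eq, eq_comm]
  rw [Finset.sum_congr rfl fun a _ => this a, Finset.sum_const, Finset.card_univ,
    nsmul_eq_mul]
  have hcard : (Fintype.card (∀ i : {i // i ∈ T}, Fin (d i.1)) : ℂ) = ∏ i ∈ T, (d i : ℂ) := by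
    rw [Fintype.card_pi]
    push_cast
    rw [← Finset.prod_coe_sort T (fun i => (d i : ℂ))]
    simp
  rw [hcard]
  have hne : (∏ i ∈ T, (d i : ℂ)) ≠ 0 := by
    refine Finset.prod_ne_zero_iff.mpr fun i _ => ?_
    exact_mod_cast (hd i).ne'
  field_simp

/-- split off one index from the complement. -/
def splitEquiv (S : Finset ι) (i0 : ι) (h0 : i0 ∉ S) :
    (∀ i : {i // i ∉ S}, Fin (d i.1)) ≃
      Fin (d i0) × (∀ i : {i // i ∉ insert i0 S}, Fin (d i.1)) where
  toFun c := (c ⟨i0, h0⟩, fun i => c ⟨i.1, fun h => i.2 (Finset.mem_insert_of_mem h)⟩)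
  invFun p := fun i =>
    if h : i.1 = i0 then Fin.cast (congrArg d h).symm p.1
    else p.2 ⟨i.1, by
      rw [Finset.mem_insert]
      push_neg
      exact ⟨h, i.2⟩⟩
  left_inv c := by
    funext i
    obtain ⟨i, hi⟩ := i
    by_cases h : i = i0
    · subst h
      simp
    · simp [h]
  right_inv p := by
    obtain ⟨v, c⟩ := p
    refine Prod.ext ?_ ?_
    · simp
    · funext i
      obtain ⟨i, hi⟩ := i
      have h : i ≠ i0 := fun h => hi (h ▸ Finset.mem_insert_self i0 S)
      simp [h]

lemma reducedEntry_insert (ψ : (∀ i, Fin (d i)) → ℂ) (S : Finset ι) (i0 : ι) (h0 : i0 ∉ S)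
    (a b : ∀ i, Fin (d i)) :
    reducedEntry d ψ S a b =
      ∑ v : Fin (d i0), reducedEntry d ψ (insert i0 S)
        (Function.update a i0 v) (Function.update b i0 v) := by
  classical
  unfold reducedEntry
  rw [← Equiv.sum_comp (splitEquiv d S i0 h0).symm
    (fun c => ψ (fun i => if h : i ∈ S then a i else c ⟨i, h⟩) *
      (starRingEnd ℂ) (ψ (fun i => if h : i ∈ S then b i else c ⟨i, h⟩)))]
  rw [Fintype.sum_prod_type]
  refine Finset.sum_congr rfl fun v _ => ?_
  refine Finset.sum_congr rfl fun c _ => ?_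
  have key : ∀ (x : ∀ i, Fin (d i)),
      (fun i => if h : i ∈ S then x i else ((splitEquiv d S i0 h0).symm (v, c)) ⟨i, h⟩)
        = fun i => if h : i ∈ insert i0 S then Function.update x i0 v i else c ⟨i, h⟩ := by
    intro x
    funext i
    by_cases hS : i ∈ S
    · have h1 : i ∈ insert i0 S := Finset.mem_insert_of_mem hS
      have h2 : i ≠ i0 := fun h => h0 (h ▸ hS)
      simp [hS, h1, Function.update, h2]
    · by_cases hi0 : i = i0
      · subst hi0
        have h1 : i ∈ insert i S := Finset.mem_insert_self i S
        simp [hS, h1, splitEquiv, Function.update]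
      · have h1 : i ∉ insert i0 S := by
          rw [Finset.mem_insert]
          push_neg
          exact ⟨hi0, hS⟩
        simp [hS, h1, splitEquiv, hi0]
  rw [key a, key b]

lemma isKUniform_down (ψ : (∀ i, Fin (d i)) → ℂ) (hd : ∀ i, 0 < d i) (k : ℕ)
    (hk : k + 1 ≤ Fintype.card ι) (h : IsKUniform d (k + 1) ψ) : IsKUniform d k ψ := by
  intro S hS a b
  have hSne : Sᶜ.Nonempty := by
    rw [← Finset.card_pos, Finset.card_compl, hS]
    omega
  obtain ⟨i0, hi0⟩ := hSne
  have h0 : i0 ∉ S := Finset.mem_compl.mp hi0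
  rw [reducedEntry_insert d ψ S i0 h0 a b]
  have hcard : (insert i0 S).card = k + 1 := by
    rw [Finset.card_insert_of_notMem h0, hS]
  have hterm : ∀ v : Fin (d i0),
      reducedEntry d ψ (insert i0 S) (Function.update a i0 v) (Function.update b i0 v)
        = if ∀ i ∈ S, a i = b i then 1 / ((d i0 : ℂ) * ∏ i ∈ S, (d i : ℂ)) else 0 := by
    intro v
    rw [h (insert i0 S) hcard, Finset.prod_insert h0]
    refine if_congr ?_ rfl rfl
    constructor
    · intro hc i hi
      have hne : i ≠ i0 := fun he => h0 (he ▸ hi)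
      have := hc i (Finset.mem_insert_of_mem hi)
      rwa [Function.update_of_ne hne, Function.update_of_ne hne] at this
    · intro hc i hi
      rcases Finset.mem_insert.mp hi with he | hi'
      · subst he
        simp
      · have hne : i ≠ i0 := fun he => h0 (he ▸ hi')
        rw [Function.update_of_ne hne, Function.update_of_ne hne]
        exact hc i hi'
  rw [Finset.sum_congr rfl fun v _ => hterm v, Finset.sum_const, Finset.card_univ,
    Fintype.card_fin, nsmul_eq_mul]
  have hd0 : ((d i0 : ℂ)) ≠ 0 := by exact_mod_cast (hd i0).ne'
  split_ifs
  · rw [mul_one_div, div_mul_eq_div_div, div_self hd0]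
  · ring

end
end AMEAux

/-- The denominator `∏_{i∈T} d_i` (resp. over `Tᶜ` when `|T| > 4`) of the purity
`Tr ρ_T²` of a hypothetical 4-uniform state. -/
def shadowDen (T : Finset (Fin 9)) : ℕ :=
  ∏ i ∈ (if T.card ≤ 4 then T else Tᶜ), dims9 i

set_option maxRecDepth 100000 in
lemma shadowDen_dvd : ∀ T : Finset (Fin 9), shadowDen T ∣ 48 := by decide

set_option maxRecDepth 100000 in
/-- the integer evaluation of `48·S₁ = -92`, i.e. `S₁ = -23/12`. -/
lemma shadow_sum_eval :
    (∑ i0 : Fin 9, ∑ T : Finset (Fin 9),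
      (∏ i ∈ T, (if i = i0 then (1 : ℤ) else -1)) * ((48 / shadowDen T : ℕ) : ℤ)) = -92 := by
  decide

lemma dims9_pos : ∀ i, 0 < dims9 i := by
  intro i
  unfold dims9
  split <;> norm_num

lemma shadowDen_pos (T : Finset (Fin 9)) : 0 < shadowDen T :=
  Finset.prod_pos fun i _ => dims9_pos i

/-- No absolutely maximally entangled state (i.e. `4`-uniform state, `4 = ⌊9/2⌋`)
exists in `C³ ⊗ (C²)^{⊗8}`; concretely, the shadow coefficient
`S₁ = ∑ₖ K₈(k;9) Aₖ'` equals `-23/12 < 0`, violating the shadow inequality. -/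
theorem no_AME_3_2222_2222 :
    (¬ ∃ ψ : (∀ i, Fin (dims9 i)) → ℂ,
        (∑ x, ‖ψ x‖ ^ 2 = 1) ∧ IsKUniform dims9 4 ψ) ∧
    (9 * (1 : ℚ) + (-7) * (13 / 3) + 5 * (25 / 3) + (-3) * (28 / 3)
        + 1 * (161 / 24) + 1 * (161 / 24) + (-3) * (28 / 3) + 5 * (25 / 3)
        + (-7) * (13 / 3) + 9 * 1 = -23 / 12) ∧
    (-23 / 12 : ℚ) < 0 := by
  refine ⟨?_, by norm_num, by norm_num⟩
  rintro ⟨ψ, -, hU4⟩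
  classical
  have hd := dims9_pos
  have hcard : Fintype.card (Fin 9) = 9 := by simp
  have hU3 : IsKUniform dims9 3 ψ := AMEAux.isKUniform_down dims9 ψ hd 3 (by simp) hU4
  have hU2 : IsKUniform dims9 2 ψ := AMEAux.isKUniform_down dims9 ψ hd 2 (by simp) hU3
  have hU1 : IsKUniform dims9 1 ψ := AMEAux.isKUniform_down dims9 ψ hd 1 (by simp) hU2
  have hU0 : IsKUniform dims9 0 ψ := AMEAux.isKUniform_down dims9 ψ hd 0 (by simp) hU1
  have hall : ∀ k, k ≤ 4 → IsKUniform dims9 k ψ := by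
    intro k hk
    interval_cases k <;> assumption
  -- the purities take the values dictated by uniformity
  have hq : ∀ T : Finset (Fin 9), AMEAux.pT dims9 ψ T = ((shadowDen T : ℂ))⁻¹ := by
    intro T
    by_cases hT : T.card ≤ 4
    · rw [AMEAux.pT_of_uniform dims9 ψ hd T (hall _ hT)]
      unfold shadowDen
      rw [if_pos hT]
      push_cast
      rfl
    · have hTc : Tᶜ.card ≤ 4 := by
        rw [Finset.card_compl, hcard]
        omega
      rw [← AMEAux.pT_compl dims9 ψ T, AMEAux.pT_of_uniform dims9 ψ hd Tᶜ (hall _ hTc)]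
      unfold shadowDen
      rw [if_neg hT]
      push_cast
      rfl
  -- shadow positivity for each distinguished party i0
  have hpos : ∀ i0 : Fin 9, ∃ r : ℝ, 0 ≤ r ∧
      (2 ^ 9 : ℂ) * ∑ T : Finset (Fin 9),
        (∏ i ∈ T, (if i = i0 then (1 : ℂ) else -1)) * AMEAux.pT dims9 ψ T = (r : ℂ) := by
    intro i0
    have := AMEAux.pos_core dims9 ψ (fun i => if i = i0 then (1 : ℂ) else -1)
      (fun i => by by_cases h : i = i0 <;> simp [h])
    rwa [hcard] at this
  choose r hr0 hr using hpos
  -- rational values of the individual terms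
  have hq48 : ∀ T : Finset (Fin 9), (48 : ℂ) * ((shadowDen T : ℂ))⁻¹
      = ((48 / shadowDen T : ℕ) : ℂ) := by
    intro T
    have h0 : ((shadowDen T : ℂ)) ≠ 0 := by
      exact_mod_cast (shadowDen_pos T).ne'
    have h2 : (48 / shadowDen T) * shadowDen T = 48 := Nat.div_mul_cancel (shadowDen_dvd T)
    have h3 : ((48 / shadowDen T : ℕ) : ℂ) * (shadowDen T : ℂ) = 48 := by
      exact_mod_cast congrArg (fun n : ℕ => (n : ℂ)) h2
    rw [← div_eq_mul_inv, div_eq_iff h0]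
    exact h3.symm
  -- the grand sum equals a nonnegative real ...
  have h1 : (0 : ℝ) ≤ ∑ i0 : Fin 9, r i0 := Finset.sum_nonneg fun i _ => hr0 i
  have key : ((∑ i0 : Fin 9, r i0 : ℝ) : ℂ) = (2 ^ 9 : ℂ) *
      ∑ i0 : Fin 9, ∑ T : Finset (Fin 9),
        (∏ i ∈ T, (if i = i0 then (1 : ℂ) else -1)) * AMEAux.pT dims9 ψ T := by
    rw [Complex.ofReal_sum, Finset.mul_sum]
    exact Finset.sum_congr rfl fun i0 _ => ((hr i0).symm)
  -- ... but also equals 2⁹ · (-23/12)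
  have heval : (48 : ℂ) * ∑ i0 : Fin 9, ∑ T : Finset (Fin 9),
      (∏ i ∈ T, (if i = i0 then (1 : ℂ) else -1)) * AMEAux.pT dims9 ψ T = -92 := by
    rw [Finset.mul_sum]
    have : ∀ i0 : Fin 9, (48 : ℂ) * ∑ T : Finset (Fin 9),
        (∏ i ∈ T, (if i = i0 then (1 : ℂ) else -1)) * AMEAux.pT dims9 ψ T
          = ∑ T : Finset (Fin 9),
        (((∏ i ∈ T, (if i = i0 then (1 : ℤ) else -1)) * ((48 / shadowDen T : ℕ) : ℤ) : ℤ) : ℂ) := by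
      intro i0
      rw [Finset.mul_sum]
      refine Finset.sum_congr rfl fun T _ => ?_
      rw [hq T]
      have hσ : ((∏ i ∈ T, (if i = i0 then (1 : ℤ) else -1) : ℤ) : ℂ)
          = ∏ i ∈ T, (if i = i0 then (1 : ℂ) else -1) := by
        push_cast [apply_ite (fun z : ℤ => (z : ℂ))]
        rfl
      rw [Int.cast_mul, hσ, Int.cast_natCast, ← hq48 T]
      ring
    rw [Finset.sum_congr rfl fun i0 _ => this i0]
    exact_mod_cast congrArg (fun z : ℤ => (z : ℂ)) shadow_sum_eval
  have hS : (∑ i0 : Fin 9, ∑ T : Finset (Fin 9),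
      (∏ i ∈ T, (if i = i0 then (1 : ℂ) else -1)) * AMEAux.pT dims9 ψ T) = -23 / 12 := by
    linear_combination (1 / 48 : ℂ) * heval
  rw [hS] at key
  have : ((∑ i0 : Fin 9, r i0 : ℝ) : ℂ) = ((-2944 / 3 : ℝ) : ℂ) := by
    rw [key]
    norm_num
  have h2 := Complex.ofReal_inj.mp this
  rw [h2] at h1
  norm_num at h1
end

section
/- Let |ψ⟩ be a k-uniform state with minimum support in C^{d_1}⊗...⊗C^{d_N} (d_1 ≥ ... ≥ d_N), written as |ψ⟩ = Σ_{(j_1,...,j_k)} c_{j_1,...,j_k} |j_1,...,j_k⟩ ⊗ |ψ(j_1,...,j_k)⟩ where each |ψ(j_1,...,j_k)⟩ is a computational basis vector of the last N−k systems and |c_{j_1,...,j_k}| = 1/√(d_1···d_k). For v = (v_1,...,v_N) ∈ Z_{d_1}×...×Z_{d_N}, define U(v) = Z_1^{v_1}⊗...⊗Z_k^{v_k}⊗X_{k+1}^{v_{k+1}}⊗...⊗X_N^{v_N} with Z_i|j⟩ = ω_i^j|j⟩ (ω_i = e^{2πi/d_i}) and X_i|j⟩ = |j+1 mod d_i⟩.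 Then the d_1 d_2 ··· d_N states {U(v)|ψ⟩} are pairwise orthogonal, hence form an orthonormal basis of C^{d_1}⊗...⊗C^{d_N}, and each U(v)|ψ⟩ is k-uniform with minimum support. -/
open Finset

open scoped Classical

/-- The action of the generalized Pauli operator
`U(v) = Z₁^{v₁} ⊗ ⋯ ⊗ Z_k^{v_k} ⊗ X_{k+1}^{v_{k+1}} ⊗ ⋯ ⊗ X_N^{v_N}` on the
coefficient vector `ψ`. -/
noncomputable def pauliAct {N : ℕ} (d : Fin N → ℕ) (k : ℕ)
    (v : ∀ i, Fin (d i)) (ψ : (∀ i, Fin (d i)) → ℂ) :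
    (∀ i, Fin (d i)) → ℂ :=
  fun x =>
    (∏ i ∈ univ.filter (fun i : Fin N => (i : ℕ) < k),
        Complex.exp (2 * Real.pi * Complex.I * ((x i : ℕ) : ℂ) * ((v i : ℕ) : ℂ)
          / ((d i : ℕ) : ℂ)))
      * ψ (fun i => if (i : ℕ) < k then x i else x i - v i)

namespace KBasisAux

lemma exp_form (x w m : ℕ) :
    2 * (Real.pi : ℂ) * Complex.I * (x : ℂ) * (w : ℂ) / (m : ℂ)
      = ((2 * Real.pi * x * w / m : ℝ) : ℂ) * Complex.I := by
  push_cast; ring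

lemma norm_exp_unit (x w m : ℕ) :
    ‖Complex.exp (2 * (Real.pi : ℂ) * Complex.I * (x : ℂ) * (w : ℂ) / (m : ℂ))‖ = 1 := by
  rw [exp_form, Complex.norm_exp_ofReal_mul_I]

lemma exp_mul_conj (x w m : ℕ) :
    Complex.exp (2 * (Real.pi : ℂ) * Complex.I * (x : ℂ) * (w : ℂ) / (m : ℂ))
      * (starRingEnd ℂ) (Complex.exp (2 * (Real.pi : ℂ) * Complex.I * (x : ℂ) * (w : ℂ) / (m : ℂ))) = 1 := by
  rw [exp_form, ← Complex.exp_conj, map_mul, Complex.conj_I, Complex.conj_ofReal,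
    ← Complex.exp_add]
  ring_nf
  exact Complex.exp_zero


lemma exp_add_fin (m : ℕ) [NeZero m] (x y : Fin m) (w : ℕ) :
    Complex.exp (2 * (Real.pi : ℂ) * Complex.I * (((x + y : Fin m) : ℕ) : ℂ) * (w : ℂ) / (m : ℂ))
      = Complex.exp (2 * (Real.pi : ℂ) * Complex.I * ((x : ℕ) : ℂ) * (w : ℂ) / (m : ℂ))
        * Complex.exp (2 * (Real.pi : ℂ) * Complex.I * ((y : ℕ) : ℂ) * (w : ℂ) / (m : ℂ)) := by
  have hm : (m : ℂ) ≠ 0 := Nat.cast_ne_zero.2 (NeZero.ne m)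
  rw [← Complex.exp_add]
  set q : ℕ := ((x : ℕ) + (y : ℕ)) / m with hqdef
  have hval : ((x + y : Fin m) : ℕ) = (x : ℕ) + (y : ℕ) - m * q := by
    rw [Fin.val_add]
    have hmd := Nat.div_add_mod ((x : ℕ) + (y : ℕ)) m
    rw [← hqdef] at hmd
    omega
  have h2 : (((x + y : Fin m) : ℕ) : ℂ) = ((x : ℕ) : ℂ) + ((y : ℕ) : ℂ) - (m : ℂ) * (q : ℂ) := by
    rw [hval]
    have hle : m * q ≤ (x : ℕ) + (y : ℕ) := by
      rw [hqdef]; exact Nat.mul_div_le _ _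
    push_cast [Nat.cast_sub hle]
    ring
  have key : 2 * (Real.pi : ℂ) * Complex.I * ((x : ℕ) : ℂ) * (w : ℂ) / (m : ℂ)
      + 2 * (Real.pi : ℂ) * Complex.I * ((y : ℕ) : ℂ) * (w : ℂ) / (m : ℂ)
      = 2 * (Real.pi : ℂ) * Complex.I * (((x + y : Fin m) : ℕ) : ℂ) * (w : ℂ) / (m : ℂ)
        + ((q * w : ℕ) : ℤ) * (2 * (Real.pi : ℂ) * Complex.I) := by
    rw [h2]
    push_cast
    field_simp
    ring
  rw [key, Complex.exp_add, Complex.exp_int_mul_two_pi_mul_I, mul_one]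

lemma exp_ne_one (m : ℕ) (x y : Fin m) (hxy : x ≠ y) :
    (starRingEnd ℂ) (Complex.exp (2 * (Real.pi : ℂ) * Complex.I * (1 : ℂ) * ((x : ℕ) : ℂ) / (m : ℂ)))
      * Complex.exp (2 * (Real.pi : ℂ) * Complex.I * (1 : ℂ) * ((y : ℕ) : ℂ) / (m : ℂ)) ≠ 1 := by
  have hm0 : 0 < m := x.pos
  have hm : (m : ℂ) ≠ 0 := Nat.cast_ne_zero.2 hm0.ne'
  have hA : (starRingEnd ℂ) (2 * (Real.pi : ℂ) * Complex.I * (1 : ℂ) * ((x : ℕ) : ℂ) / (m : ℂ))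
      = -(2 * (Real.pi : ℂ) * Complex.I * (1 : ℂ) * ((x : ℕ) : ℂ) / (m : ℂ)) := by
    have : 2 * (Real.pi : ℂ) * Complex.I * (1 : ℂ) * ((x : ℕ) : ℂ) / (m : ℂ)
        = ((2 * Real.pi * (x : ℕ) / m : ℝ) : ℂ) * Complex.I := by push_cast; ring
    rw [this, map_mul, Complex.conj_I, Complex.conj_ofReal]; ring
  rw [← Complex.exp_conj, hA, ← Complex.exp_add]
  intro h
  rw [Complex.exp_eq_one_iff] at h
  obtain ⟨n, hn⟩ := h
  have h2pI : (2 : ℂ) * (Real.pi : ℂ) * Complex.I ≠ 0 := by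
    simp [Real.pi_ne_zero, Complex.I_ne_zero]
  have hint : ((y : ℕ) : ℤ) - ((x : ℕ) : ℤ) = n * m := by
    have h4 := hn
    field_simp at h4
    have h5 : (2 * (Real.pi : ℂ) * Complex.I * (m : ℂ)) * ((y : ℕ) : ℂ)
        = (2 * (Real.pi : ℂ) * Complex.I * (m : ℂ)) * (((x : ℕ) : ℂ) + (n : ℂ) * (m : ℂ)) := by
      linear_combination (2 * (Real.pi : ℂ) * Complex.I * (m : ℂ)) * h4
    have h6 := mul_left_cancel₀ (mul_ne_zero h2pI hm) h5
    have h7 : ((y : ℕ) : ℂ) - ((x : ℕ) : ℂ) = (n : ℂ) * (m : ℂ) := by linear_combination h6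
    exact_mod_cast h7
  have hx := x.2
  have hy := y.2
  have hn0 : n = 0 := by
    rcases lt_trichotomy n 0 with h | h | h
    · have : n * m ≤ -m := by
        have : n ≤ -1 := by omega
        nlinarith [Int.ofNat_lt.2 hm0]
      omega
    · exact h
    · have : (m : ℤ) ≤ n * m := by
        have : 1 ≤ n := by omega
        nlinarith [Int.ofNat_lt.2 hm0]
      omega
  apply hxy
  rw [hn0] at hint
  exact Fin.ext (by omega)


lemma fiber_unique {α β : Type} [Fintype α] [Fintype β] [DecidableEq α] [DecidableEq β]
    (s : Finset α) (g : α → β)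
    (hcard : s.card = Fintype.card β)
    (hsurj : ∀ b : β, ∃ a ∈ s, g a = b) :
    ∀ x ∈ s, ∀ y ∈ s, g x = g y → x = y := by
  have hfib := Finset.card_eq_sum_card_fiberwise
    (f := g) (s := s) (t := (univ : Finset β)) (fun a _ => mem_univ _)
  have hone : ∀ b ∈ (univ : Finset β), (1 : ℕ) ≤ (s.filter fun a => g a = b).card := by
    intro b _
    obtain ⟨a, ha, hab⟩ := hsurj b
    exact Finset.card_pos.2 ⟨a, Finset.mem_filter.2 ⟨ha, hab⟩⟩
  have hsum : ∑ b ∈ (univ : Finset β), (1 : ℕ)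
      = ∑ b ∈ (univ : Finset β), (s.filter fun a => g a = b).card := by
    rw [← hfib, Finset.sum_const, smul_eq_mul, mul_one, Finset.card_univ, hcard]
  have hall := (Finset.sum_eq_sum_iff_of_le hone).1 hsum
  intro x hx y hy hxy
  have h1 := hall (g x) (mem_univ _)
  have hcard1 : (s.filter fun a => g a = g x).card ≤ 1 := le_of_eq h1.symm
  exact Finset.card_le_one.1 hcard1 x (Finset.mem_filter.2 ⟨hx, rfl⟩) y
    (Finset.mem_filter.2 ⟨hy, hxy.symm⟩)

end KBasisAux

/-- Given a `k`-uniform state `ψ` with minimum support in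
`C^{d₁} ⊗ ⋯ ⊗ C^{d_N}` (with `d₁ ≥ ⋯ ≥ d_N`), the `d₁⋯d_N` generalized-Pauli
translates `U(v)ψ` are pairwise orthogonal, each is a normalized `k`-uniform
state with minimum support, and together they span the whole space, hence form
an orthogonal basis. -/
theorem kUniform_min_support_basis {N k : ℕ} (d : Fin N → ℕ)
    (hd : ∀ i, 0 < d i) (hmono : ∀ i j : Fin N, i ≤ j → d j ≤ d i) (hk : k ≤ N)
    (ψ : (∀ i, Fin (d i)) → ℂ)
    (hnorm : ∑ x, ‖ψ x‖ ^ 2 = 1)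
    (hu : IsKUniform d k ψ)
    (hsupp : (univ.filter fun x => ψ x ≠ 0).card =
      ∏ i ∈ univ.filter (fun i : Fin N => (i : ℕ) < k), d i) :
    (∀ v u : ∀ i, Fin (d i), v ≠ u →
      ∑ x, (starRingEnd ℂ) (pauliAct d k v ψ x) * pauliAct d k u ψ x = 0) ∧
    (∀ v : ∀ i, Fin (d i),
      (∑ x, ‖pauliAct d k v ψ x‖ ^ 2 = 1) ∧
      IsKUniform d k (pauliAct d k v ψ) ∧
      (univ.filter fun x => pauliAct d k v ψ x ≠ 0).card =
        ∏ i ∈ univ.filter (fun i : Fin N => (i : ℕ) < k), d i) ∧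
    Submodule.span ℂ (Set.range fun v : ∀ i, Fin (d i) => pauliAct d k v ψ) = ⊤ := by
  haveI hNZ : ∀ i, NeZero (d i) := fun i => ⟨(hd i).ne'⟩
  set A : Finset (Fin N) := univ.filter (fun i : Fin N => (i : ℕ) < k) with hAdef
  have hmemA : ∀ i : Fin N, i ∈ A ↔ (i : ℕ) < k := by intro i; simp [hAdef]
  have hAcard : A.card = k := by
    have : A = (univ : Finset (Fin k)).map (Fin.castLEEmb hk) := by
      ext i
      constructor
      · intro hi
        exact Finset.mem_map.2 ⟨⟨(i : ℕ), (hmemA i).1 hi⟩, mem_univ _, rfl⟩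
      · intro hi
        obtain ⟨j, _, hj⟩ := Finset.mem_map.1 hi
        rw [hmemA, ← hj]
        exact j.2
    rw [this, Finset.card_map, Finset.card_univ, Fintype.card_fin]
  have hprodC : (∏ i ∈ A, (d i : ℂ)) ≠ 0 :=
    Finset.prod_ne_zero_iff.2 fun i _ => Nat.cast_ne_zero.2 (hd i).ne'
  have hDne : (1 : ℂ) / ∏ i ∈ A, (d i : ℂ) ≠ 0 := div_ne_zero one_ne_zero hprodC
  -- row normalization
  have hrow : ∀ x : ∀ i, Fin (d i),
      ∑ c : ∀ i : {i // i ∉ A}, Fin (d i.1),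
        ψ (fun i => if h : i ∈ A then x i else c ⟨i, h⟩) *
          (starRingEnd ℂ) (ψ (fun i => if h : i ∈ A then x i else c ⟨i, h⟩))
        = 1 / ∏ i ∈ A, (d i : ℂ) := by
    intro x
    have h := hu A hAcard x x
    rw [if_pos (fun i _ => rfl)] at h
    rw [reducedEntry] at h
    exact h
  -- support uniqueness
  have huniq : ∀ x y : ∀ i, Fin (d i), ψ x ≠ 0 → ψ y ≠ 0 →
      (∀ i ∈ A, x i = y i) → x = y := by
    have hcardRA : Fintype.card (∀ j : {i // i ∈ A}, Fin (d j.1)) = ∏ i ∈ A, d i := by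
      rw [Fintype.card_pi]
      simp only [Fintype.card_fin]
      exact Finset.prod_coe_sort A d
    have hexist : ∀ x : ∀ i, Fin (d i),
        ∃ c : ∀ i : {i // i ∉ A}, Fin (d i.1),
          ψ (fun i => if h : i ∈ A then x i else c ⟨i, h⟩) ≠ 0 := by
      intro x
      by_contra hcon
      push_neg at hcon
      have := hrow x
      rw [Finset.sum_eq_zero (fun c _ => by rw [hcon c, zero_mul])] at this
      exact hDne this.symm
    have key := KBasisAux.fiber_unique (α := ∀ i, Fin (d i))
      (β := ∀ j : {i // i ∈ A}, Fin (d j.1))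
      (univ.filter fun x => ψ x ≠ 0) (fun x j => x j.1)
      (by rw [hsupp, hcardRA])
      (by
        intro ρ
        obtain ⟨c, hc⟩ := hexist (fun i => if h : i ∈ A then ρ ⟨i, h⟩ else 0)
        refine ⟨fun i => if h : i ∈ A then ρ ⟨i, h⟩ else c ⟨i, h⟩, ?_, ?_⟩
        · rw [Finset.mem_filter]
          refine ⟨mem_univ _, ?_⟩
          convert hc using 2
          funext i
          by_cases h : i ∈ A <;> simp [h]
        · funext j
          simp [j.2])
    intro x y hx hy hxy
    exact key x (Finset.mem_filter.2 ⟨mem_univ _, hx⟩)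
      y (Finset.mem_filter.2 ⟨mem_univ _, hy⟩)
      (funext fun j => hxy j.1 j.2)
  -- the permutation equivalence
  obtain ⟨σ, hσ⟩ : ∃ σ : (∀ i, Fin (d i)) → ((∀ i, Fin (d i)) ≃ (∀ i, Fin (d i))),
      ∀ v x i, σ v x i = if (i : ℕ) < k then x i else x i - v i := by
    refine ⟨fun v => Equiv.piCongrRight (fun i =>
      if (i : ℕ) < k then Equiv.refl (Fin (d i)) else Equiv.subRight (v i)), ?_⟩
    intro v x i
    by_cases h : (i : ℕ) < k <;> simp [h]
  have hpauli : ∀ v x, pauliAct d k v ψ x =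
      (∏ i ∈ A, Complex.exp (2 * Real.pi * Complex.I * ((x i : ℕ) : ℂ) * ((v i : ℕ) : ℂ)
        / ((d i : ℕ) : ℂ))) * ψ (σ v x) := by
    intro v x
    rw [pauliAct, ← hAdef]
    congr 1
    exact congrArg ψ (funext fun i => (hσ v x i).symm)
  have hΦnorm : ∀ (v x : ∀ i, Fin (d i)),
      ‖∏ i ∈ A, Complex.exp (2 * Real.pi * Complex.I * ((x i : ℕ) : ℂ) * ((v i : ℕ) : ℂ)
        / ((d i : ℕ) : ℂ))‖ = 1 := by
    intro v x
    rw [norm_prod]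
    exact Finset.prod_eq_one fun i _ => KBasisAux.norm_exp_unit _ _ _
  have hΦne : ∀ (v x : ∀ i, Fin (d i)),
      (∏ i ∈ A, Complex.exp (2 * Real.pi * Complex.I * ((x i : ℕ) : ℂ) * ((v i : ℕ) : ℂ)
        / ((d i : ℕ) : ℂ))) ≠ 0 :=
    fun v x => Finset.prod_ne_zero_iff.2 fun i _ => Complex.exp_ne_zero _
  have hnorm2 : ∀ v, ∑ x, ‖pauliAct d k v ψ x‖ ^ 2 = 1 := by
    intro v
    have heach : ∀ x, ‖pauliAct d k v ψ x‖ ^ 2 = ‖ψ (σ v x)‖ ^ 2 := by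
      intro x
      rw [hpauli, norm_mul, hΦnorm, one_mul]
    rw [Finset.sum_congr rfl fun x _ => heach x]
    rw [show (∑ x, ‖ψ (σ v x)‖ ^ 2) = ∑ y, ‖ψ y‖ ^ 2 from
      Equiv.sum_comp (σ v) (fun y => ‖ψ y‖ ^ 2)]
    exact hnorm
  have hsupp2 : ∀ v, (univ.filter fun x => pauliAct d k v ψ x ≠ 0).card = ∏ i ∈ A, d i := by
    intro v
    have hset : (univ.filter fun x => pauliAct d k v ψ x ≠ 0)
        = (univ.filter fun y => ψ y ≠ 0).map (σ v).symm.toEmbedding := by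
      ext x
      rw [Finset.mem_map_equiv]
      simp only [Equiv.symm_symm, Finset.mem_filter, mem_univ, true_and]
      rw [hpauli]
      constructor
      · intro h h2; exact h (by rw [h2, mul_zero])
      · intro h
        exact mul_ne_zero (hΦne v x) h
    rw [hset, Finset.card_map, hsupp]
  have hku2 : ∀ v, IsKUniform d k (pauliAct d k v ψ) := by
    intro v S hS a b
    obtain ⟨γ, hγ⟩ : ∃ γ : ((∀ j : {i // i ∉ S}, Fin (d j.1)) ≃ (∀ j : {i // i ∉ S}, Fin (d j.1))),
        ∀ c j, γ c j = if ((j : Fin N) : ℕ) < k then c j else c j - v j.1 := by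
      refine ⟨Equiv.piCongrRight (fun j =>
        if ((j : Fin N) : ℕ) < k then Equiv.refl _ else Equiv.subRight (v j.1)), ?_⟩
      intro c j
      by_cases h : ((j : Fin N) : ℕ) < k <;> simp [h]
    have hterm : ∀ c : ∀ j : {i // i ∉ S}, Fin (d j.1),
        (pauliAct d k v ψ (fun i => if h : i ∈ S then a i else c ⟨i, h⟩)) *
          (starRingEnd ℂ) (pauliAct d k v ψ (fun i => if h : i ∈ S then b i else c ⟨i, h⟩))
        = (∏ i ∈ A, (if i ∈ S then
              Complex.exp (2*Real.pi*Complex.I*((a i : ℕ):ℂ)*((v i : ℕ):ℂ)/((d i:ℕ):ℂ)) *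
              (starRingEnd ℂ) (Complex.exp (2*Real.pi*Complex.I*((b i : ℕ):ℂ)*((v i : ℕ):ℂ)/((d i:ℕ):ℂ)))
            else 1)) *
          (ψ (fun i => if h : i ∈ S then σ v a i else (γ c) ⟨i,h⟩) *
            (starRingEnd ℂ) (ψ (fun i => if h : i ∈ S then σ v b i else (γ c) ⟨i,h⟩))) := by
      intro c
      rw [hpauli, hpauli, map_mul]
      have hargA : σ v (fun i => if h : i ∈ S then a i else c ⟨i, h⟩)
          = fun i => if h : i ∈ S then σ v a i else (γ c) ⟨i,h⟩ := by
        funext i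
        rw [hσ]
        by_cases h : i ∈ S
        · simp only [dif_pos h, hσ]
        · simp only [dif_neg h, hγ]
      have hargB : σ v (fun i => if h : i ∈ S then b i else c ⟨i, h⟩)
          = fun i => if h : i ∈ S then σ v b i else (γ c) ⟨i,h⟩ := by
        funext i
        rw [hσ]
        by_cases h : i ∈ S
        · simp only [dif_pos h, hσ]
        · simp only [dif_neg h, hγ]
      rw [hargA, hargB, map_prod]
      rw [show ∀ (p q r s : ℂ), p * q * (r * s) = (p * r) * (q * s) from fun p q r s => by ring]
      congr 1
      rw [← Finset.prod_mul_distrib]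
      refine Finset.prod_congr rfl fun i hi => ?_
      by_cases h : i ∈ S
      · rw [if_pos h]
        congr 3
        · rw [dif_pos h]
        · rw [dif_pos h]
      · rw [if_neg h, dif_neg h, dif_neg h]
        exact KBasisAux.exp_mul_conj _ _ _
    rw [reducedEntry, Finset.sum_congr rfl fun c _ => hterm c, ← Finset.mul_sum]
    have hredu := hu S hS (σ v a) (σ v b)
    rw [reducedEntry] at hredu
    rw [show (∑ c : ∀ j : {i // i ∉ S}, Fin (d j.1),
          (ψ (fun i => if h : i ∈ S then σ v a i else (γ c) ⟨i,h⟩) *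
            (starRingEnd ℂ) (ψ (fun i => if h : i ∈ S then σ v b i else (γ c) ⟨i,h⟩))))
        = ∑ e : ∀ j : {i // i ∉ S}, Fin (d j.1),
          (ψ (fun i => if h : i ∈ S then σ v a i else e ⟨i,h⟩) *
            (starRingEnd ℂ) (ψ (fun i => if h : i ∈ S then σ v b i else e ⟨i,h⟩)))
      from Equiv.sum_comp γ (fun e =>
        (ψ fun i => if h : i ∈ S then σ v a i else e ⟨i,h⟩) *
          (starRingEnd ℂ) (ψ fun i => if h : i ∈ S then σ v b i else e ⟨i,h⟩)), hredu]
    have hcond : (∀ i ∈ S, σ v a i = σ v b i) ↔ (∀ i ∈ S, a i = b i) := by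
      refine forall₂_congr fun i _ => ?_
      rw [hσ, hσ]
      by_cases h : (i : ℕ) < k
      · simp [h]
      · simp only [if_neg h]
        exact sub_left_inj
    by_cases hab : ∀ i ∈ S, a i = b i
    · rw [if_pos (hcond.2 hab), if_pos hab]
      rw [Finset.prod_eq_one, one_mul]
      intro i hi
      by_cases h : i ∈ S
      · rw [if_pos h, hab i h]
        exact KBasisAux.exp_mul_conj _ _ _
      · rw [if_neg h]
    · rw [if_neg (fun h => hab (hcond.1 h)), if_neg hab, mul_zero]
  have hrow2 : ∀ a : ∀ j : {i // i ∈ A}, Fin (d j.1),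
      ∑ c : ∀ i : {i // i ∉ A}, Fin (d i.1),
        (starRingEnd ℂ) (ψ (fun i => if h : i ∈ A then a ⟨i,h⟩ else c ⟨i, h⟩)) *
          ψ (fun i => if h : i ∈ A then a ⟨i,h⟩ else c ⟨i, h⟩)
        = 1 / ∏ i ∈ A, (d i : ℂ) := by
    intro a
    rw [← hrow (fun i => if h : i ∈ A then a ⟨i,h⟩ else 0)]
    refine Finset.sum_congr rfl fun c _ => ?_
    have harg : (fun i => if h : i ∈ A then
          (fun i' => if h' : i' ∈ A then a ⟨i',h'⟩ else (0 : Fin (d i'))) i else c ⟨i,h⟩)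
        = fun i => if h : i ∈ A then a ⟨i,h⟩ else c ⟨i,h⟩ := by
      funext i
      by_cases h : i ∈ A <;> simp [h]
    rw [harg]
    ring
  have hchar : ∀ v u : ∀ i, Fin (d i), (∃ i₀ : Fin N, (i₀ : ℕ) < k ∧ v i₀ ≠ u i₀) →
      ∑ a : ∀ j : {i // i ∈ A}, Fin (d j.1),
        ∏ j : {i // i ∈ A},
          ((starRingEnd ℂ) (Complex.exp (2*Real.pi*Complex.I*((a j : ℕ):ℂ)*((v j.1 : ℕ):ℂ)/((d j.1:ℕ):ℂ))) *
            Complex.exp (2*Real.pi*Complex.I*((a j : ℕ):ℂ)*((u j.1 : ℕ):ℂ)/((d j.1:ℕ):ℂ))) = 0 := by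
    intro v u h
    obtain ⟨i₀, hik, hvu⟩ := h
    have hmem : i₀ ∈ A := (hmemA i₀).2 hik
    have hd2 : 2 ≤ d i₀ := by
      by_contra hcon
      push_neg at hcon
      apply hvu
      have h1 : d i₀ = 1 := by have := hd i₀; omega
      have hv2 := (v i₀).2
      have hu2 := (u i₀).2
      exact Fin.ext (by omega)
    set w : Fin (d i₀) := ⟨1, by omega⟩ with hw
    set δ : ∀ j : {i // i ∈ A}, Fin (d j.1) := Pi.single ⟨i₀, hmem⟩ w with hδ
    set F : (∀ j : {i // i ∈ A}, Fin (d j.1)) → ℂ := fun a =>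
      ∏ j : {i // i ∈ A},
        ((starRingEnd ℂ) (Complex.exp (2*Real.pi*Complex.I*((a j : ℕ):ℂ)*((v j.1 : ℕ):ℂ)/((d j.1:ℕ):ℂ))) *
          Complex.exp (2*Real.pi*Complex.I*((a j : ℕ):ℂ)*((u j.1 : ℕ):ℂ)/((d j.1:ℕ):ℂ))) with hF
    have hstep : ∀ a, F (a + δ) = F a * F δ := by
      intro a
      simp only [hF]
      rw [← Finset.prod_mul_distrib]
      refine Finset.prod_congr rfl fun j _ => ?_
      have hadd : (a + δ) j = a j + δ j := rfl
      rw [hadd, KBasisAux.exp_add_fin, KBasisAux.exp_add_fin, map_mul]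
      ring
    have hsum := Equiv.sum_comp (Equiv.addRight δ) F
    simp only [Equiv.coe_addRight] at hsum
    rw [Finset.sum_congr rfl fun a _ => hstep a, ← Finset.sum_mul] at hsum
    by_contra hS0
    have hFδ : F δ = 1 := by
      have h2 : (∑ a, F a) * F δ = (∑ a, F a) * 1 := by rw [mul_one]; exact hsum
      exact mul_left_cancel₀ hS0 h2
    have hFδval : F δ = (starRingEnd ℂ) (Complex.exp (2*Real.pi*Complex.I*(1:ℂ)*((v i₀ : ℕ):ℂ)/((d i₀:ℕ):ℂ))) *
        Complex.exp (2*Real.pi*Complex.I*(1:ℂ)*((u i₀ : ℕ):ℂ)/((d i₀:ℕ):ℂ)) := by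
      simp only [hF]
      rw [Finset.prod_eq_single (⟨i₀, hmem⟩ : {i // i ∈ A})]
      · rw [hδ, Pi.single_eq_same]
        norm_num [hw]
      · intro j _ hj
        rw [hδ, Pi.single_eq_of_ne hj]
        simp
      · intro h; exact absurd (Finset.mem_univ _) h
    rw [hFδval] at hFδ
    exact KBasisAux.exp_ne_one (d i₀) (v i₀) (u i₀) hvu hFδ
  have horth : ∀ v u : ∀ i, Fin (d i), v ≠ u →
      ∑ x, (starRingEnd ℂ) (pauliAct d k v ψ x) * pauliAct d k u ψ x = 0 := by
    intro v u hvu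
    by_cases hB : ∀ i : Fin N, ¬ (i : ℕ) < k → v i = u i
    · have hσeq : ∀ x, σ v x = σ u x := by
        intro x; funext i; rw [hσ, hσ]
        by_cases h : (i : ℕ) < k
        · simp [h]
        · simp only [if_neg h, hB i h]
      have hex : ∃ i₀ : Fin N, (i₀ : ℕ) < k ∧ v i₀ ≠ u i₀ := by
        by_contra hcon
        push_neg at hcon
        apply hvu
        funext i
        by_cases h : (i : ℕ) < k
        · exact hcon i h
        · exact hB i h
      set G : (∀ i, Fin (d i)) → ℂ := fun y =>
        (∏ i ∈ A, ((starRingEnd ℂ) (Complex.exp (2*Real.pi*Complex.I*((y i : ℕ):ℂ)*((v i : ℕ):ℂ)/((d i:ℕ):ℂ))) *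
            Complex.exp (2*Real.pi*Complex.I*((y i : ℕ):ℂ)*((u i : ℕ):ℂ)/((d i:ℕ):ℂ)))) *
          ((starRingEnd ℂ) (ψ y) * ψ y) with hG
      have hterm : ∀ x, (starRingEnd ℂ) (pauliAct d k v ψ x) * pauliAct d k u ψ x = G (σ v x) := by
        intro x
        rw [hpauli, hpauli, map_mul, ← hσeq x]
        simp only [hG]
        have hprod : (∏ i ∈ A, ((starRingEnd ℂ) (Complex.exp (2*Real.pi*Complex.I*(((σ v x) i : ℕ):ℂ)*((v i : ℕ):ℂ)/((d i:ℕ):ℂ))) *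
              Complex.exp (2*Real.pi*Complex.I*(((σ v x) i : ℕ):ℂ)*((u i : ℕ):ℂ)/((d i:ℕ):ℂ))))
            = ∏ i ∈ A, ((starRingEnd ℂ) (Complex.exp (2*Real.pi*Complex.I*((x i : ℕ):ℂ)*((v i : ℕ):ℂ)/((d i:ℕ):ℂ))) *
              Complex.exp (2*Real.pi*Complex.I*((x i : ℕ):ℂ)*((u i : ℕ):ℂ)/((d i:ℕ):ℂ))) := by
          refine Finset.prod_congr rfl fun i hi => ?_
          rw [hσ, if_pos ((hmemA i).1 hi)]
        rw [hprod, Finset.prod_mul_distrib, map_prod]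
        ring
      rw [Finset.sum_congr rfl fun x _ => hterm x]
      rw [Equiv.sum_comp (σ v) G]
      rw [← Equiv.sum_comp (Equiv.piEquivPiSubtypeProd (fun i => i ∈ A) (fun i => Fin (d i))).symm G]
      rw [Fintype.sum_prod_type]
      have hinner : ∀ a : ∀ j : {i // i ∈ A}, Fin (d j.1),
          ∑ c : ∀ i : {i // i ∉ A}, Fin (d i.1),
            G ((Equiv.piEquivPiSubtypeProd (fun i => i ∈ A) (fun i => Fin (d i))).symm (a, c))
          = (∏ j : {i // i ∈ A},
              ((starRingEnd ℂ) (Complex.exp (2*Real.pi*Complex.I*((a j : ℕ):ℂ)*((v j.1 : ℕ):ℂ)/((d j.1:ℕ):ℂ))) *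
                Complex.exp (2*Real.pi*Complex.I*((a j : ℕ):ℂ)*((u j.1 : ℕ):ℂ)/((d j.1:ℕ):ℂ))))
              * (1 / ∏ i ∈ A, (d i:ℂ)) := by
        intro a
        rw [← hrow2 a, Finset.mul_sum]
        refine Finset.sum_congr rfl fun c _ => ?_
        have hmg : (Equiv.piEquivPiSubtypeProd (fun i => i ∈ A) (fun i => Fin (d i))).symm (a, c)
            = fun i => if h : i ∈ A then a ⟨i,h⟩ else c ⟨i,h⟩ := by
          funext i
          simp [Equiv.piEquivPiSubtypeProd]
        rw [hmg]
        simp only [hG]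
        congr 1
        rw [← Finset.prod_coe_sort A (fun i =>
          ((starRingEnd ℂ) (Complex.exp (2*Real.pi*Complex.I*((((if h : i ∈ A then a ⟨i,h⟩ else c ⟨i,h⟩ : Fin (d i))) : ℕ):ℂ)*((v i : ℕ):ℂ)/((d i:ℕ):ℂ))) *
            Complex.exp (2*Real.pi*Complex.I*((((if h : i ∈ A then a ⟨i,h⟩ else c ⟨i,h⟩ : Fin (d i))) : ℕ):ℂ)*((u i : ℕ):ℂ)/((d i:ℕ):ℂ))))]
        refine Finset.prod_congr rfl fun j _ => ?_
        rw [dif_pos j.2]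
      rw [Finset.sum_congr rfl fun a _ => hinner a, ← Finset.sum_mul]
      rw [hchar v u hex, zero_mul]
    · push_neg at hB
      obtain ⟨i₀, hik, hvu0⟩ := hB
      rw [Finset.sum_eq_zero]
      intro x _
      rw [hpauli, hpauli, map_mul]
      rcases eq_or_ne (ψ (σ v x)) 0 with h0 | h0
      · rw [h0, map_zero, mul_zero, zero_mul]
      rcases eq_or_ne (ψ (σ u x)) 0 with h1 | h1
      · rw [h1, mul_zero, mul_zero]
      exfalso
      have hagree : ∀ i ∈ A, σ v x i = σ u x i := by
        intro i hi
        rw [hσ, hσ, if_pos ((hmemA i).1 hi), if_pos ((hmemA i).1 hi)]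
      have heq := huniq _ _ h0 h1 hagree
      have hi0 := congrFun heq i₀
      rw [hσ, hσ, if_neg (not_lt.2 hik), if_neg (not_lt.2 hik)] at hi0
      exact hvu0 (sub_right_inj.1 hi0)
  have hnormC : ∀ v, ∑ x, (starRingEnd ℂ) (pauliAct d k v ψ x) * pauliAct d k v ψ x = 1 := by
    intro v
    have heach : ∀ x : ∀ i, Fin (d i),
        (starRingEnd ℂ) (pauliAct d k v ψ x) * pauliAct d k v ψ x
          = ((‖pauliAct d k v ψ x‖ ^ 2 : ℝ) : ℂ) := by
      intro x
      rw [mul_comm, Complex.mul_conj]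
      rw [Complex.normSq_eq_norm_sq]
    rw [Finset.sum_congr rfl fun x _ => heach x, ← Complex.ofReal_sum, hnorm2 v,
      Complex.ofReal_one]
  have hspan : Submodule.span ℂ
      (Set.range fun v : ∀ i, Fin (d i) => pauliAct d k v ψ) = ⊤ := by
    have hli : LinearIndependent ℂ (fun v : ∀ i, Fin (d i) => pauliAct d k v ψ) := by
      rw [Fintype.linearIndependent_iff]
      intro g hg u
      have key : ∀ v, ∑ x, (starRingEnd ℂ) (pauliAct d k u ψ x) * (g v • pauliAct d k v ψ) x
          = if v = u then g u else 0 := by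
        intro v
        have heach : ∀ x : ∀ i, Fin (d i),
            (starRingEnd ℂ) (pauliAct d k u ψ x) * (g v • pauliAct d k v ψ) x
              = g v * ((starRingEnd ℂ) (pauliAct d k u ψ x) * pauliAct d k v ψ x) := by
          intro x
          simp only [Pi.smul_apply, smul_eq_mul]
          ring
        rw [Finset.sum_congr rfl fun x _ => heach x, ← Finset.mul_sum]
        rcases eq_or_ne v u with rfl | hvu
        · rw [if_pos rfl, hnormC v, mul_one]
        · rw [if_neg hvu, horth u v (Ne.symm hvu), mul_zero]
      have h0 : (0:ℂ) = ∑ v : ∀ i, Fin (d i), if v = u then g u else 0 := by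
        calc (0:ℂ) = ∑ x, (starRingEnd ℂ) (pauliAct d k u ψ x)
              * (0 : (∀ i, Fin (d i)) → ℂ) x := by simp
        _ = ∑ x, (starRingEnd ℂ) (pauliAct d k u ψ x) * (∑ v, g v • pauliAct d k v ψ) x := by
            rw [hg]
        _ = ∑ x, ∑ v, (starRingEnd ℂ) (pauliAct d k u ψ x) * (g v • pauliAct d k v ψ) x := by
            refine Finset.sum_congr rfl fun x _ => ?_
            rw [Finset.sum_apply, Finset.mul_sum]
        _ = ∑ v, ∑ x, (starRingEnd ℂ) (pauliAct d k u ψ x) * (g v • pauliAct d k v ψ) x :=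
            Finset.sum_comm
        _ = ∑ v, if v = u then g u else 0 := Finset.sum_congr rfl fun v _ => key v
      rw [Finset.sum_ite_eq' univ u (fun _ => g u)] at h0
      simpa using h0.symm
    exact hli.span_eq_top_of_card_eq_finrank' (by rw [Module.finrank_pi])
  exact ⟨horth, fun v => ⟨hnorm2 v, hku2 v, hsupp2 v⟩, hspan⟩
end

section
/- If a k-uniform state exists in C^{d_1}⊗C^{d_2}⊗...⊗C^{d_N} with d_1 ≥ d_2 ≥ ... ≥ d_N, then d_1 d_2 ··· d_k ≤ d_{k+1} d_{k+2} ··· d_N; in particular k ≤ ⌊N/2⌋. -/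
open Finset

/-- If `M * X = 1` then the number of rows of `M` is at most its number of
columns. -/
lemma card_le_of_right_inverse {A B : Type} [Fintype A] [Fintype B]
    [DecidableEq A] (M : Matrix A B ℂ) (X : Matrix B A ℂ) (h : M * X = 1) :
    Fintype.card A ≤ Fintype.card B :=
  calc Fintype.card A = (1 : Matrix A A ℂ).rank := Matrix.rank_one.symm
    _ = (M * X).rank := by rw [h]
    _ ≤ M.rank := Matrix.rank_mul_le_left M X
    _ ≤ Fintype.card B := M.rank_le_card_width

/-- If a `k`-uniform state exists in `C^{d₁} ⊗ ⋯ ⊗ C^{d_N}` with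
`d₁ ≥ d₂ ≥ ⋯ ≥ d_N` (all dimensions at least 2), then
`d₁⋯d_k ≤ d_{k+1}⋯d_N`; in particular `k ≤ ⌊N/2⌋`. -/
theorem kUniform_dimension_bound {N k : ℕ} (d : Fin N → ℕ)
    (h2 : ∀ i, 2 ≤ d i) (hmono : ∀ i j : Fin N, i ≤ j → d j ≤ d i) (hk : k ≤ N)
    (h : ∃ ψ : (∀ i, Fin (d i)) → ℂ,
      (∑ x, ‖ψ x‖ ^ 2 = 1) ∧ IsKUniform d k ψ) :
    (∏ i ∈ univ.filter fun i : Fin N => (i : ℕ) < k, d i) ≤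
      (∏ i ∈ univ.filter fun i : Fin N => ¬ (i : ℕ) < k, d i) ∧
    k ≤ N / 2 := by
  obtain ⟨ψ, -, huni⟩ := h
  set S : Finset (Fin N) := univ.filter fun i : Fin N => (i : ℕ) < k with hS
  set T : Finset (Fin N) := univ.filter fun i : Fin N => ¬ (i : ℕ) < k with hT
  have hmemS : ∀ i : Fin N, i ∈ S ↔ (i : ℕ) < k := by
    intro i; simp [hS]
  have hScard : S.card = k := by
    have himg : S = Finset.image
        (fun j : Fin k => (⟨j, lt_of_lt_of_le j.2 hk⟩ : Fin N)) univ := by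
      ext i
      simp only [hS, mem_filter, mem_univ, true_and, Finset.mem_image]
      constructor
      · intro hi; exact ⟨⟨i, hi⟩, rfl⟩
      · rintro ⟨j, rfl⟩; exact j.2
    have hinj : Function.Injective
        (fun j : Fin k => (⟨j, lt_of_lt_of_le j.2 hk⟩ : Fin N)) := by
      intro a b hab
      simpa [Fin.ext_iff] using hab
    rw [himg, Finset.card_image_of_injective _ hinj, card_univ, Fintype.card_fin]
  have hcards : S.card + T.card = N := by
    have := Finset.card_filter_add_card_filter_not
      (s := (univ : Finset (Fin N))) (p := fun i : Fin N => (i : ℕ) < k)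
    simpa [hS, hT] using this
  -- the dimension inequality via the rank argument
  have hmain : ∏ i ∈ S, d i ≤ ∏ i ∈ T, d i := by
    classical
    open Matrix in
    set A := ∀ i : {i : Fin N // i ∈ S}, Fin (d i.1)
    set B := ∀ i : {i : Fin N // i ∉ S}, Fin (d i.1)
    have hpos : ∀ i : Fin N, 0 < d i := fun i => lt_of_lt_of_le (by norm_num) (h2 i)
    -- extend a partial assignment on S to a full one
    let ext : A → ∀ i, Fin (d i) := fun a i =>
      if h : i ∈ S then a ⟨i, h⟩ else ⟨0, hpos i⟩
    let M : Matrix A B ℂ := fun a c =>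
      ψ (fun i => if h : i ∈ S then a ⟨i, h⟩ else c ⟨i, h⟩)
    set D : ℂ := ∏ i ∈ S, (d i : ℂ) with hD
    have hDne : D ≠ 0 := by
      rw [hD]
      refine Finset.prod_ne_zero_iff.2 fun i _ => ?_
      exact_mod_cast (hpos i).ne'
    have hMM : M * Mᴴ = D⁻¹ • (1 : Matrix A A ℂ) := by
      ext a b
      have hentry : (M * Mᴴ) a b = reducedEntry d ψ S (ext a) (ext b) := by
        rw [Matrix.mul_apply]
        unfold reducedEntry
        refine Finset.sum_congr rfl fun c _ => ?_
        have harg : ∀ x : A, (fun i => if h : i ∈ S then ext x i else c ⟨i, h⟩)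
            = fun i => if h : i ∈ S then x ⟨i, h⟩ else c ⟨i, h⟩ := by
          intro x; funext i; by_cases h : i ∈ S <;> simp [ext, h]
        rw [harg a, harg b]
        simp only [Matrix.conjTranspose_apply, starRingEnd_apply, M]
        rfl
      rw [hentry, huni S hScard (ext a) (ext b)]
      have hcond : (∀ i ∈ S, ext a i = ext b i) ↔ a = b := by
        constructor
        · intro hab
          funext i
          have := hab i.1 i.2
          simpa [ext, i.2] using this
        · rintro rfl; intro i _; rfl
      by_cases hab : a = b
      · simp [hcond, hab, Matrix.smul_apply, Matrix.one_apply, ← hD, one_div]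
      · have : ¬ (∀ i ∈ S, ext a i = ext b i) := fun hc => hab (hcond.1 hc)
        simp [this, hab, Matrix.smul_apply, Matrix.one_apply]
    have hinv : M * (D • Mᴴ) = 1 := by
      rw [Matrix.mul_smul, hMM, smul_smul, mul_inv_cancel₀ hDne, one_smul]
    have hcard := card_le_of_right_inverse M (D • Mᴴ) hinv
    have hcardA : Fintype.card A = ∏ i ∈ S, d i := by
      rw [Fintype.card_pi]
      exact (Finset.prod_subtype S (fun x => Iff.rfl)
        (fun i => Fintype.card (Fin (d i)))).symm.trans
        (by simp)
    have hcardB : Fintype.card B = ∏ i ∈ T, d i := by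
      rw [Fintype.card_pi]
      refine ((Finset.prod_subtype T (fun x => ?_)
        (fun i => Fintype.card (Fin (d i)))).symm.trans (by simp))
      simp [hT, hS]
    rwa [hcardA, hcardB] at hcard
  refine ⟨hmain, ?_⟩
  -- now the counting argument
  by_contra hlt
  push_neg at hlt
  have hN2k : N < 2 * k := by omega
  -- map each party outside S to one inside S with a larger dimension
  let f : Fin N → Fin N := fun j => ⟨j - k, by omega⟩
  have hTle : ∏ j ∈ T, d j ≤ ∏ j ∈ T, d (f j) := by
    refine Finset.prod_le_prod (fun _ _ => Nat.zero_le _) fun j _ => ?_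
    refine hmono (f j) j ?_
    simp only [f, Fin.le_def]
    omega
  have hinj : Set.InjOn f T := by
    intro x hx y hy hxy
    have hx' : k ≤ (x : ℕ) := by simpa [hT] using hx
    have hy' : k ≤ (y : ℕ) := by simpa [hT] using hy
    have := congrArg Fin.val hxy
    simp only [f] at this
    exact Fin.ext (by omega)
  have himg : ∏ j ∈ T, d (f j) = ∏ i ∈ T.image f, d i :=
    (Finset.prod_image fun x hx y hy => hinj hx hy).symm
  have hsub : T.image f ⊆ S := by
    intro i hi
    obtain ⟨j, hj, rfl⟩ := Finset.mem_image.1 hi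
    have hj' : k ≤ (j : ℕ) := by simpa [hT] using hj
    rw [hmemS]
    simp only [f]
    omega
  have hcardim : (T.image f).card = N - k := by
    rw [Finset.card_image_of_injOn hinj]
    omega
  have hrest : 2 ≤ ∏ i ∈ S \ T.image f, d i := by
    have hcard' : 1 ≤ (S \ T.image f).card := by
      rw [Finset.card_sdiff_of_subset hsub, hcardim, hScard]
      omega
    calc (2 : ℕ) = 2 ^ 1 := rfl
      _ ≤ 2 ^ (S \ T.image f).card := Nat.pow_le_pow_right (by norm_num) hcard'
      _ = ∏ _i ∈ S \ T.image f, 2 := by rw [Finset.prod_const]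
      _ ≤ ∏ i ∈ S \ T.image f, d i :=
        Finset.prod_le_prod (fun _ _ => by norm_num) fun i _ => h2 i
  have hSbig : 2 * ∏ j ∈ T, d j ≤ ∏ i ∈ S, d i := by
    calc 2 * ∏ j ∈ T, d j ≤ (∏ i ∈ S \ T.image f, d i) * ∏ i ∈ T.image f, d i := by
          exact Nat.mul_le_mul hrest (hTle.trans_eq himg)
      _ = ∏ i ∈ S, d i := Finset.prod_sdiff hsub
  have hTpos : 0 < ∏ j ∈ T, d j :=
    Finset.prod_pos fun i _ => lt_of_lt_of_le (by norm_num) (h2 i)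
  omega
end

section
/- If there exists an absolutely maximally entangled state in (C^d)^{⊗N} with N even, then there exists an absolutely maximally entangled state in C^{d²}⊗(C^d)^{⊗(N−2)} (a system of N−1 parties). -/
open Finset

section Generic

variable {ι : Type} [Fintype ι] [DecidableEq ι]

def splitFun (d : ι → ℕ) {S T : Finset ι} (hST : S ⊆ T)
    (c : ∀ i : {i // i ∉ S}, Fin (d i.1)) :
    (∀ i : {i // i ∈ T \ S}, Fin (d i.1)) × (∀ i : {i // i ∉ T}, Fin (d i.1)) :=
  ⟨fun i => c ⟨i.1, (Finset.mem_sdiff.mp i.2).2⟩,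
   fun i => c ⟨i.1, fun hs => i.2 (hST hs)⟩⟩

lemma splitFun_bijective (d : ι → ℕ) {S T : Finset ι} (hST : S ⊆ T) :
    Function.Bijective (splitFun d hST) := by
  rw [Function.bijective_iff_has_inverse]
  refine ⟨fun p i => if h : i.1 ∈ T then p.1 ⟨i.1, Finset.mem_sdiff.mpr ⟨h, i.2⟩⟩
      else p.2 ⟨i.1, h⟩, ?_, ?_⟩
  · intro c
    funext i
    dsimp only [splitFun]
    split <;> rfl
  · intro p
    refine Prod.ext ?_ ?_ <;> funext i <;> dsimp only [splitFun]
    · rw [dif_pos (Finset.mem_sdiff.mp i.2).1]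
    · rw [dif_neg i.2]

lemma reducedEntry_split (d : ι → ℕ) (ψ : (∀ i, Fin (d i)) → ℂ) {S T : Finset ι}
    (hST : S ⊆ T) (a b : ∀ i, Fin (d i)) :
    reducedEntry d ψ S a b =
      ∑ v : ∀ i : {i // i ∈ T \ S}, Fin (d i.1),
        reducedEntry d ψ T
          (fun i => if h : i ∈ T \ S then v ⟨i, h⟩ else a i)
          (fun i => if h : i ∈ T \ S then v ⟨i, h⟩ else b i) := by
  classical
  have key : ∀ (x : ∀ i, Fin (d i)) (c : ∀ i : {i // i ∉ S}, Fin (d i.1)),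
      (fun i => if h : i ∈ S then x i else c ⟨i, h⟩)
        = (fun i => if h : i ∈ T then
            (if h2 : i ∈ T \ S then (splitFun d hST c).1 ⟨i, h2⟩ else x i)
          else (splitFun d hST c).2 ⟨i, h⟩) := by
    intro x c
    funext i
    by_cases hS : i ∈ S
    · rw [dif_pos hS, dif_pos (hST hS), dif_neg (fun h => (Finset.mem_sdiff.mp h).2 hS)]
    · by_cases hT : i ∈ T
      · rw [dif_neg hS, dif_pos hT, dif_pos (Finset.mem_sdiff.mpr ⟨hT, hS⟩)]
        rfl
      · rw [dif_neg hS, dif_neg hT]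
        rfl
  unfold reducedEntry
  refine Eq.trans (Fintype.sum_bijective (splitFun d hST) (splitFun_bijective d hST) _
    (fun p => ψ (fun i => if h : i ∈ T then (if h2 : i ∈ T \ S then p.1 ⟨i, h2⟩ else a i)
        else p.2 ⟨i, h⟩) *
      (starRingEnd ℂ) (ψ (fun i => if h : i ∈ T then
        (if h2 : i ∈ T \ S then p.1 ⟨i, h2⟩ else b i) else p.2 ⟨i, h⟩)))
    ?_) ?_
  · intro c
    rw [key a c, key b c]
  · rw [Fintype.sum_prod_type]

lemma isKUniform_mono {d : ι → ℕ} (hd : ∀ i, 0 < d i) {K : ℕ}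
    {ψ : (∀ i, Fin (d i)) → ℂ} (h : IsKUniform d K ψ) (hK : K ≤ Fintype.card ι)
    {S : Finset ι} (hS : S.card ≤ K) (a b : ∀ i, Fin (d i)) :
    reducedEntry d ψ S a b =
      if ∀ i ∈ S, a i = b i then 1 / ∏ i ∈ S, (d i : ℂ) else 0 := by
  classical
  obtain ⟨T, hST, -, hT⟩ := Finset.exists_subsuperset_card_eq (Finset.subset_univ S) hS
    (by simpa using hK)
  rw [reducedEntry_split d ψ hST a b]
  have hcond : ∀ v : ∀ i : {i // i ∈ T \ S}, Fin (d i.1),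
      ((∀ i ∈ T, (fun i => if h : i ∈ T \ S then v ⟨i, h⟩ else a i) i
          = (fun i => if h : i ∈ T \ S then v ⟨i, h⟩ else b i) i)
        ↔ (∀ i ∈ S, a i = b i)) := by
    intro v
    constructor
    · intro hv i hi
      have hns : i ∉ T \ S := fun hh => (Finset.mem_sdiff.mp hh).2 hi
      have := hv i (hST hi)
      simpa only [dif_neg hns] using this
    · intro hab i hi
      by_cases h2 : i ∈ T \ S
      · simp only [dif_pos h2]
      · have hiS : i ∈ S := by
          by_contra hc
          exact h2 (Finset.mem_sdiff.mpr ⟨hi, hc⟩)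
        simp [dif_neg h2, hab i hiS]
  rw [Finset.sum_congr rfl (fun v _ => (h T hT _ _).trans (if_congr (hcond v) rfl rfl))]
  rw [Finset.sum_const]
  have hcards : (Finset.univ : Finset (∀ i : {i // i ∈ T \ S}, Fin (d i.1))).card
      = ∏ i ∈ T \ S, d i := by
    rw [Finset.card_univ, Fintype.card_pi]
    simp [Finset.prod_coe_sort, Finset.prod_attach]
  rw [hcards]
  have hP : (∏ i ∈ T \ S, (d i : ℂ)) ≠ 0 :=
    Finset.prod_ne_zero_iff.mpr fun i _ => Nat.cast_ne_zero.mpr (hd i).ne'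
  have hR : (∏ i ∈ S, (d i : ℂ)) ≠ 0 :=
    Finset.prod_ne_zero_iff.mpr fun i _ => Nat.cast_ne_zero.mpr (hd i).ne'
  have hprod : (∏ i ∈ T \ S, (d i : ℂ)) * ∏ i ∈ S, (d i : ℂ) = ∏ i ∈ T, (d i : ℂ) :=
    Finset.prod_sdiff hST
  by_cases hab : ∀ i ∈ S, a i = b i
  · rw [if_pos hab, if_pos hab, nsmul_eq_mul, Nat.cast_prod]
    rw [← hprod]
    field_simp
  · rw [if_neg hab, if_neg hab, smul_zero]

end Generic

/-- Dimensions of the merged system `C^{d²} ⊗ (C^d)^{⊗(N-2)}`. -/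
def dimsAME (d N : ℕ) : Option (Fin (N - 2)) → ℕ :=
  fun o => o.elim (d ^ 2) (fun _ => d)

section Merge

def e2 (d : ℕ) : Fin (d ^ 2) ≃ Fin d × Fin d :=
  (finCongr (pow_two d)).trans finProdFinEquiv.symm

def pidx (N : ℕ) (j : Fin N) : Option (Fin (N - 2)) :=
  if _ : (j : ℕ) < 2 then none else some ⟨(j : ℕ) - 2, by have := j.isLt; omega⟩

def toFull (d : ℕ) {N : ℕ} (x : ∀ o, Fin (dimsAME d N o)) (j : Fin N) : Fin d :=
  if h : (j : ℕ) < 2 then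
    (if (j : ℕ) = 0 then (e2 d (x none)).1 else (e2 d (x none)).2)
  else x (some ⟨(j : ℕ) - 2, by have := j.isLt; omega⟩)

def ofFull (d : ℕ) {N : ℕ} (hN : 2 ≤ N) (y : Fin N → Fin d) :
    ∀ o : Option (Fin (N - 2)), Fin (dimsAME d N o) :=
  fun o => match o with
  | none => (e2 d).symm (y ⟨0, by omega⟩, y ⟨1, by omega⟩)
  | some i => y ⟨(i : ℕ) + 2, by have := i.isLt; omega⟩

lemma pidx_lt {N : ℕ} (j : Fin N) (h : (j : ℕ) < 2) : pidx N j = none := dif_pos h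

lemma pidx_ge {N : ℕ} (j : Fin N) (h : ¬ (j : ℕ) < 2) :
    pidx N j = some ⟨(j : ℕ) - 2, by have := j.isLt; omega⟩ := dif_neg h

lemma toFull_congr {d N : ℕ} {x x' : ∀ o, Fin (dimsAME d N o)} (j : Fin N)
    (h : x (pidx N j) = x' (pidx N j)) : toFull d x j = toFull d x' j := by
  unfold toFull
  by_cases hj : (j : ℕ) < 2
  · rw [pidx_lt j hj] at h
    erw [dif_pos hj, dif_pos hj, h]
  · rw [pidx_ge j hj] at h
    erw [dif_neg hj, dif_neg hj]
    exact h

lemma ofFull_toFull {d N : ℕ} (hN : 2 ≤ N) (x : ∀ o, Fin (dimsAME d N o)) :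
    ofFull d hN (toFull d x) = x := by
  funext o
  cases o with
  | none =>
      show (e2 d).symm (toFull d x ⟨0, by omega⟩, toFull d x ⟨1, by omega⟩) = x none
      have h0 : toFull d x ⟨0, by omega⟩ = (e2 d (x none)).1 := by
        unfold toFull
        erw [dif_pos (show ((⟨0, by omega⟩ : Fin N) : ℕ) < 2 by simp)]
        simp
      have h1 : toFull d x ⟨1, by omega⟩ = (e2 d (x none)).2 := by
        unfold toFull
        erw [dif_pos (show ((⟨1, by omega⟩ : Fin N) : ℕ) < 2 by simp)]
        simp
      rw [h0, h1]
      exact (e2 d).symm_apply_apply (x none)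
  | some i =>
      show toFull d x ⟨(i : ℕ) + 2, by have := i.isLt; omega⟩ = x (some i)
      unfold toFull
      erw [dif_neg (show ¬ ((⟨(i : ℕ) + 2, by have := i.isLt; omega⟩ : Fin N) : ℕ) < 2 by simp)]
      rfl

lemma toFull_ofFull {d N : ℕ} (hN : 2 ≤ N) (y : Fin N → Fin d) :
    toFull d (ofFull d hN y) = y := by
  funext j
  unfold toFull
  by_cases hj : (j : ℕ) < 2
  · erw [dif_pos hj]
    by_cases h0 : (j : ℕ) = 0
    · rw [if_pos h0]
      show (e2 d ((e2 d).symm (y ⟨0, by omega⟩, y ⟨1, by omega⟩))).1 = y j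
      rw [Equiv.apply_symm_apply]
      have hj0 : j = (⟨0, by omega⟩ : Fin N) := Fin.ext (by simp [h0])
      rw [hj0]
    · rw [if_neg h0]
      show (e2 d ((e2 d).symm (y ⟨0, by omega⟩, y ⟨1, by omega⟩))).2 = y j
      rw [Equiv.apply_symm_apply]
      have hj1 : j = (⟨1, by omega⟩ : Fin N) := Fin.ext (by simp; omega)
      rw [hj1]
  · erw [dif_neg hj]
    show y ⟨(j : ℕ) - 2 + 2, _⟩ = y j
    have hj2 : (⟨(j : ℕ) - 2 + 2, by have := j.isLt; omega⟩ : Fin N) = j :=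
      Fin.ext (by simp; omega)
    rw [hj2]

lemma toFull_bijective {d N : ℕ} (hN : 2 ≤ N) :
    Function.Bijective (toFull d (N := N)) :=
  Function.bijective_iff_has_inverse.mpr
    ⟨ofFull d hN, ofFull_toFull hN, toFull_ofFull hN⟩

lemma ofFull_congr {d N : ℕ} (hN : 2 ≤ N) {Y Y' : Fin N → Fin d}
    (o : Option (Fin (N - 2))) (h : ∀ j : Fin N, pidx N j = o → Y j = Y' j) :
    ofFull d hN Y o = ofFull d hN Y' o := by
  cases o with
  | none =>
      show (e2 d).symm (Y ⟨0, by omega⟩, Y ⟨1, by omega⟩)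
        = (e2 d).symm (Y' ⟨0, by omega⟩, Y' ⟨1, by omega⟩)
      rw [h ⟨0, by omega⟩ (pidx_lt _ (by simp)), h ⟨1, by omega⟩ (pidx_lt _ (by simp))]
  | some i =>
      show Y ⟨(i : ℕ) + 2, by have := i.isLt; omega⟩ = Y' ⟨(i : ℕ) + 2, _⟩
      refine h _ ?_
      rw [pidx_ge _ (by simp)]
      rfl

end Merge


section MergedSet

def mergedSet {N : ℕ} (S : Finset (Option (Fin (N - 2)))) : Finset (Fin N) :=
  Finset.univ.filter (fun j => pidx N j ∈ S)

lemma mem_mergedSet {N : ℕ} {S : Finset (Option (Fin (N - 2)))} (j : Fin N) :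
    j ∈ mergedSet S ↔ pidx N j ∈ S := by simp [mergedSet]

lemma fiber_none {N : ℕ} (hN : 2 ≤ N) :
    (Finset.univ.filter (fun j : Fin N => pidx N j = none))
      = {⟨0, by omega⟩, ⟨1, by omega⟩} := by
  ext j
  by_cases hj : (j : ℕ) < 2 <;> simp [pidx, hj, Fin.ext_iff] <;> omega

lemma fiber_some {N : ℕ} (i : Fin (N - 2)) :
    (Finset.univ.filter (fun j : Fin N => pidx N j = some i))
      = {⟨(i : ℕ) + 2, by have := i.isLt; omega⟩} := by
  ext j
  by_cases hj : (j : ℕ) < 2 <;> simp [pidx, hj, Fin.ext_iff] <;> omega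

lemma filter_mergedSet {N : ℕ} (S : Finset (Option (Fin (N - 2))))
    {o : Option (Fin (N - 2))} (ho : o ∈ S) :
    (mergedSet S).filter (fun j => pidx N j = o)
      = Finset.univ.filter (fun j : Fin N => pidx N j = o) := by
  ext j
  simp only [Finset.mem_filter, mem_mergedSet, Finset.mem_univ, true_and,
    and_iff_right_iff_imp]
  intro h
  rw [h]
  exact ho

lemma card_fiber {N : ℕ} (hN : 2 ≤ N) (o : Option (Fin (N - 2))) :
    (Finset.univ.filter (fun j : Fin N => pidx N j = o)).card
      = if o = none then 2 else 1 := by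
  cases o with
  | none =>
      rw [fiber_none hN, if_pos rfl]
      exact Finset.card_pair (by simp [Fin.ext_iff])
  | some i =>
      rw [fiber_some i, if_neg (by simp)]
      exact Finset.card_singleton _

lemma card_mergedSet {N : ℕ} (hN : 2 ≤ N) (S : Finset (Option (Fin (N - 2)))) :
    (mergedSet S).card ≤ S.card + 1 := by
  classical
  rw [Finset.card_eq_sum_card_fiberwise
    (f := fun j => pidx N j) (t := S) (fun j hj => (mem_mergedSet j).mp hj)]
  calc ∑ o ∈ S, ((mergedSet S).filter (fun j => pidx N j = o)).card
      = ∑ o ∈ S, if o = none then 2 else 1 := by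
        refine Finset.sum_congr rfl (fun o ho => ?_)
        rw [filter_mergedSet S ho, card_fiber hN o]
    _ = ∑ o ∈ S, (1 + if o = none then 1 else 0) := by
        refine Finset.sum_congr rfl (fun o _ => ?_)
        by_cases h : o = none <;> simp [h]
    _ = S.card + ∑ o ∈ S, (if o = none then 1 else 0) := by
        rw [Finset.sum_add_distrib, Finset.sum_const, smul_eq_mul, mul_one]
    _ ≤ S.card + 1 := by
        gcongr
        rw [Finset.sum_ite_eq' S none (fun _ => 1)]
        split <;> omega

lemma prod_mergedSet {d N : ℕ} (hN : 2 ≤ N) (S : Finset (Option (Fin (N - 2)))) :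
    (∏ j ∈ mergedSet S, (d : ℂ)) = ∏ o ∈ S, (dimsAME d N o : ℂ) := by
  classical
  rw [← Finset.prod_fiberwise_of_maps_to
    (g := fun j => pidx N j) (t := S) (fun j hj => (mem_mergedSet j).mp hj) (fun _ => (d : ℂ))]
  refine Finset.prod_congr rfl (fun o ho => ?_)
  rw [filter_mergedSet S ho]
  cases o with
  | none =>
      rw [fiber_none hN, Finset.prod_pair (by simp [Fin.ext_iff])]
      simp [dimsAME]
      ring
  | some i =>
      rw [fiber_some i, Finset.prod_singleton]
      simp [dimsAME]

end MergedSet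

section MergeMap

def mergeMap {d N : ℕ} (S : Finset (Option (Fin (N - 2)))) (a : ∀ o, Fin (dimsAME d N o))
    (c : ∀ o : {o // o ∉ S}, Fin (dimsAME d N o.1)) (j : {j // j ∉ mergedSet S}) : Fin d :=
  toFull d (fun o => if h : o ∈ S then a o else c ⟨o, h⟩) j.1

lemma mergeMap_spec {d N : ℕ} (S : Finset (Option (Fin (N - 2))))
    (a x : ∀ o, Fin (dimsAME d N o)) (c : ∀ o : {o // o ∉ S}, Fin (dimsAME d N o.1)) :
    (fun j : Fin N => if h : j ∈ mergedSet S then toFull d x j else mergeMap S a c ⟨j, h⟩)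
      = toFull d (fun o => if h : o ∈ S then x o else c ⟨o, h⟩) := by
  funext j
  by_cases hj : j ∈ mergedSet S
  · rw [dif_pos hj]
    refine toFull_congr j ?_
    have hp : pidx N j ∈ S := (mem_mergedSet j).mp hj
    show x (pidx N j) = if h : pidx N j ∈ S then x (pidx N j) else c ⟨pidx N j, h⟩
    rw [dif_pos hp]
  · rw [dif_neg hj]
    unfold mergeMap
    refine toFull_congr j ?_
    have hp : pidx N j ∉ S := fun h => hj ((mem_mergedSet j).mpr h)
    show (if h : pidx N j ∈ S then a (pidx N j) else c ⟨pidx N j, h⟩)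
      = (if h : pidx N j ∈ S then x (pidx N j) else c ⟨pidx N j, h⟩)
    rw [dif_neg hp, dif_neg hp]

lemma mergeMap_bijective {d N : ℕ} (hN : 2 ≤ N) (S : Finset (Option (Fin (N - 2))))
    (a : ∀ o, Fin (dimsAME d N o)) :
    Function.Bijective (mergeMap (d := d) (N := N) S a) := by
  rw [Function.bijective_iff_has_inverse]
  refine ⟨fun c' o => ofFull d hN
    (fun j => if h : j ∈ mergedSet S then toFull d a j else c' ⟨j, h⟩) o.1, ?_, ?_⟩
  · intro c
    funext o
    show ofFull d hN
      (fun j => if h : j ∈ mergedSet S then toFull d a j else mergeMap S a c ⟨j, h⟩) o.1 = c o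
    rw [mergeMap_spec S a a c, ofFull_toFull hN]
    exact dif_neg o.2
  · intro c'
    funext j
    show toFull d (fun o => if h : o ∈ S then a o else ofFull d hN
      (fun j' => if h' : j' ∈ mergedSet S then toFull d a j' else c' ⟨j', h'⟩) o) j.1 = c' j
    have hp : pidx N j.1 ∉ S := fun h => j.2 ((mem_mergedSet j.1).mpr h)
    refine Eq.trans (toFull_congr (x' := ofFull d hN
      (fun j' => if h' : j' ∈ mergedSet S then toFull d a j' else c' ⟨j', h'⟩)) j.1 ?_) ?_
    · show (if h : pidx N j.1 ∈ S then a (pidx N j.1) else ofFull d hN _ (pidx N j.1))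
        = ofFull d hN _ (pidx N j.1)
      rw [dif_neg hp]
    · rw [toFull_ofFull hN]
      exact dif_neg j.2

lemma reducedEntry_merge {d N : ℕ} (hN : 2 ≤ N) (ψ : (Fin N → Fin d) → ℂ)
    (S : Finset (Option (Fin (N - 2)))) (a b : ∀ o, Fin (dimsAME d N o)) :
    reducedEntry (dimsAME d N) (fun x => ψ (toFull d x)) S a b
      = reducedEntry (fun _ : Fin N => d) ψ (mergedSet S) (toFull d a) (toFull d b) := by
  unfold reducedEntry
  refine Fintype.sum_bijective (mergeMap S a) (mergeMap_bijective hN S a) _ _ ?_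
  intro c
  rw [mergeMap_spec S a a c, mergeMap_spec S a b c]

lemma cond_merge {d N : ℕ} (hN : 2 ≤ N) (S : Finset (Option (Fin (N - 2))))
    (a b : ∀ o, Fin (dimsAME d N o)) :
    (∀ j ∈ mergedSet S, toFull d a j = toFull d b j) ↔ (∀ o ∈ S, a o = b o) := by
  constructor
  · intro h o ho
    calc a o = ofFull d hN (toFull d a) o := (congrFun (ofFull_toFull hN a) o).symm
      _ = ofFull d hN (toFull d b) o := ofFull_congr hN o
          (fun j hj => h j ((mem_mergedSet j).mpr (hj ▸ ho)))
      _ = b o := congrFun (ofFull_toFull hN b) o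
  · intro h j hj
    exact toFull_congr j (h (pidx N j) ((mem_mergedSet j).mp hj))

end MergeMap


/-- If an absolutely maximally entangled state (an `N/2`-uniform state) exists in
`(C^d)^{⊗N}` with `N` even, then an absolutely maximally entangled state (an
`⌊(N-1)/2⌋`-uniform state) exists in `C^{d²} ⊗ (C^d)^{⊗(N-2)}`. -/
theorem AME_merge {d N : ℕ} (hd : 0 < d) (hN : 2 ≤ N) (hEven : Even N)
    (h : ∃ ψ : (Fin N → Fin d) → ℂ,
      (∑ x, ‖ψ x‖ ^ 2 = 1) ∧ IsKUniform (fun _ : Fin N => d) (N / 2) ψ) :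
    ∃ φ : (∀ o, Fin (dimsAME d N o)) → ℂ,
      (∑ x, ‖φ x‖ ^ 2 = 1) ∧ IsKUniform (dimsAME d N) ((N - 1) / 2) φ := by
  obtain ⟨ψ, hnorm, hU⟩ := h
  obtain ⟨m, hm⟩ := hEven
  refine ⟨fun x => ψ (toFull d x), ?_, ?_⟩
  · rw [← hnorm]
    exact Fintype.sum_bijective (toFull d) (toFull_bijective hN) _ _ (fun x => rfl)
  · intro S hScard a b
    have hcard : (mergedSet S).card ≤ N / 2 := by
      have := card_mergedSet hN S
      omega
    rw [reducedEntry_merge hN ψ S a b,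
      isKUniform_mono (fun _ => hd) hU (by simp; omega) hcard (toFull d a) (toFull d b)]
    by_cases hc : ∀ o ∈ S, a o = b o
    · rw [if_pos ((cond_merge hN S a b).mpr hc), if_pos hc]
      have := prod_mergedSet (d := d) hN S
      simp only [this]
    · rw [if_neg (fun hh => hc ((cond_merge hN S a b).mp hh)), if_neg hc]
end

section
/- If a k-uniform state with minimum support exists in C^{d_1}⊗C^{d_2}⊗...⊗C^{d_N} with d_1 ≥ ... ≥ d_N, then for every subset {i_1,...,i_k} ⊂ {1,...,N}, the product d_{i_1} d_{i_2} ··· d_{i_k} divides d_1 d_2 ··· d_k. -/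
open Finset

open scoped Classical

lemma glue_sum {ι : Type} [Fintype ι] [DecidableEq ι] {d : ι → ℕ}
    (S : Finset ι) (a : ∀ i, Fin (d i)) {M : Type} [AddCommMonoid M]
    (g : (∀ i, Fin (d i)) → M) :
    ∑ c : ∀ i : {i // i ∉ S}, Fin (d i.1),
      g (fun i => if h : i ∈ S then a i else c ⟨i, h⟩) =
    ∑ x ∈ univ.filter (fun x => ∀ i ∈ S, x i = a i), g x := by
  refine Finset.sum_nbij' (fun c => fun i => if h : i ∈ S then a i else c ⟨i, h⟩)
    (fun x => fun i => x i.1) ?_ ?_ ?_ ?_ ?_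
  · intro c _
    simp only [mem_filter, mem_univ, true_and]
    intro i hi; simp [hi]
  · intro x _; exact mem_univ _
  · intro c _
    funext i
    rcases i with ⟨i, hi⟩
    simp [hi]
  · intro x hx
    simp only [mem_filter, mem_univ, true_and] at hx
    funext i
    by_cases h : i ∈ S
    · simp [h, hx i h]
    · simp [h]
  · intro c _; rfl

lemma reducedEntry_diag {ι : Type} [Fintype ι] [DecidableEq ι] {d : ι → ℕ}
    (ψ : (∀ i, Fin (d i)) → ℂ) (S : Finset ι) (a : ∀ i, Fin (d i)) :
    reducedEntry d ψ S a a =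
      ((∑ x ∈ univ.filter (fun x => ∀ i ∈ S, x i = a i), ‖ψ x‖ ^ 2 : ℝ) : ℂ) := by
  rw [reducedEntry, glue_sum S a (fun x => ψ x * (starRingEnd ℂ) (ψ x))]
  push_cast
  exact Finset.sum_congr rfl fun x _ => Complex.mul_conj' (ψ x)

/-- If a `k`-uniform state with minimum support exists in
`C^{d₁} ⊗ ⋯ ⊗ C^{d_N}` with `d₁ ≥ ⋯ ≥ d_N`, then for every `k`-subset
`{i₁, …, i_k}` of the parties, `d_{i₁}⋯d_{i_k}` divides `d₁⋯d_k`. -/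
theorem min_support_divisibility {N k : ℕ} (d : Fin N → ℕ)
    (hd : ∀ i, 0 < d i) (hmono : ∀ i j : Fin N, i ≤ j → d j ≤ d i) (hk : k ≤ N)
    (ψ : (∀ i, Fin (d i)) → ℂ)
    (hnorm : ∑ x, ‖ψ x‖ ^ 2 = 1)
    (hu : IsKUniform d k ψ)
    (hsupp : (univ.filter fun x => ψ x ≠ 0).card =
      ∏ i ∈ univ.filter (fun i : Fin N => (i : ℕ) < k), d i) :
    ∀ S : Finset (Fin N), S.card = k →
      (∏ i ∈ S, d i) ∣ ∏ i ∈ univ.filter (fun i : Fin N => (i : ℕ) < k), d i := by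
  intro S hS
  set T : Finset (Fin N) := univ.filter (fun i : Fin N => (i : ℕ) < k) with hT
  set M : ℕ := ∏ i ∈ T, d i with hM
  have hMpos : 0 < M := Finset.prod_pos fun i _ => hd i
  -- card of T is k
  have hTcard : T.card = k := by
    rw [hT]
    rw [show (univ.filter fun i : Fin N => (i : ℕ) < k) =
        Finset.map (Fin.castLEEmb hk) univ from ?_]
    · simp
    · ext i
      simp only [mem_filter, mem_univ, true_and, Finset.mem_map]
      constructor
      · intro hi
        exact ⟨⟨(i : ℕ), hi⟩, by ext; simp⟩
      · rintro ⟨j, rfl⟩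
        simpa using j.2
  set supp : Finset (∀ i, Fin (d i)) := univ.filter fun x => ψ x ≠ 0 with hsuppdef
  -- key diagonal identity in ℝ
  have key : ∀ (S' : Finset (Fin N)), S'.card = k → ∀ a : ∀ i, Fin (d i),
      ∑ x ∈ univ.filter (fun x => ∀ i ∈ S', x i = a i), ‖ψ x‖ ^ 2 =
        1 / ∏ i ∈ S', (d i : ℝ) := by
    intro S' hS' a
    have h := hu S' hS' a a
    rw [reducedEntry_diag, if_pos (fun i _ => rfl)] at h
    rw [show (1 / (∏ i ∈ S', (d i : ℂ))) = (((1 / ∏ i ∈ S', (d i : ℝ)) : ℝ) : ℂ) by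
      push_cast; ring] at h
    have h2 := Complex.ofReal_inj.mp h
    convert h2 using 2
    · congr

  -- restrict sum in key to the support
  have key' : ∀ (S' : Finset (Fin N)), S'.card = k → ∀ a : ∀ i, Fin (d i),
      ∑ x ∈ supp.filter (fun x => ∀ i ∈ S', x i = a i), ‖ψ x‖ ^ 2 =
        1 / ∏ i ∈ S', (d i : ℝ) := by
    intro S' hS' a
    rw [← key S' hS' a]
    have heq : supp.filter (fun x => ∀ i ∈ S', x i = a i) =
        (univ.filter (fun x => ∀ i ∈ S', x i = a i)).filter (fun x => ψ x ≠ 0) := by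
      rw [hsuppdef, Finset.filter_filter, Finset.filter_filter]
      apply Finset.filter_congr
      intro x _; tauto
    rw [heq]
    refine Finset.sum_filter_of_ne fun x _ hx => ?_
    intro h0
    apply hx
    rw [h0]; simp
  -- the restriction map to the first k parties
  set r : (∀ i, Fin (d i)) → (∀ i : {i // i ∈ T}, Fin (d i.1)) := fun x i => x i.1 with hr
  have hPcard : Fintype.card (∀ i : {i // i ∈ T}, Fin (d i.1)) = M := by
    rw [Fintype.card_pi]
    simp only [Fintype.card_fin]
    rw [hM, ← Finset.prod_coe_sort T d]
  have hprodT : (0:ℝ) < ∏ i ∈ T, (d i : ℝ) :=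
    Finset.prod_pos fun i _ => by exact_mod_cast hd i
  have hsurj : ∀ p : ∀ i : {i // i ∈ T}, Fin (d i.1), ∃ x ∈ supp, r x = p := by
    intro p
    set a : ∀ i, Fin (d i) := fun i => if h : i ∈ T then p ⟨i, h⟩ else ⟨0, hd i⟩ with ha
    have h := key' T hTcard a
    have hne : (1 / ∏ i ∈ T, (d i : ℝ)) ≠ 0 := by positivity
    have hex : ∃ x ∈ supp.filter (fun x => ∀ i ∈ T, x i = a i), ‖ψ x‖ ^ 2 ≠ 0 := by
      by_contra hno
      push_neg at hno
      rw [Finset.sum_eq_zero hno] at h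
      exact hne h.symm
    obtain ⟨x, hx, -⟩ := hex
    rw [mem_filter] at hx
    refine ⟨x, hx.1, funext fun i => ?_⟩
    have h1 := hx.2 i.1 i.2
    rw [hr]
    simp only []
    rw [h1, ha]
    simp [i.2]
  have himg : Finset.image r supp = Finset.univ := by
    apply Finset.eq_univ_iff_forall.mpr
    intro p
    obtain ⟨x, hx, hrx⟩ := hsurj p
    exact Finset.mem_image.mpr ⟨x, hx, hrx⟩
  have hinj : Set.InjOn r ↑supp := by
    apply Finset.card_image_iff.mp
    rw [himg, Finset.card_univ, hPcard, hsupp]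
  -- every support coefficient has modulus squared 1/M
  have hmod : ∀ x ∈ supp, ‖ψ x‖ ^ 2 = 1 / (M : ℝ) := by
    intro x hx
    have h := key' T hTcard x
    have hone : supp.filter (fun y => ∀ i ∈ T, y i = x i) = {x} := by
      ext y
      simp only [mem_filter, Finset.mem_singleton]
      constructor
      · rintro ⟨hy, hmatch⟩
        exact hinj (Finset.mem_coe.mpr hy) (Finset.mem_coe.mpr hx)
          (funext fun i => hmatch i.1 i.2)
      · rintro rfl
        exact ⟨hx, fun i _ => rfl⟩
    rw [hone, Finset.sum_singleton] at h
    rw [h, hM]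
    push_cast
    ring
  -- counting argument for an arbitrary k-subset S
  set Q : ℕ := ∏ i ∈ S, d i with hQ
  have hQpos : 0 < Q := Finset.prod_pos fun i _ => hd i
  set a : ∀ i, Fin (d i) := fun i => ⟨0, hd i⟩ with ha
  have h := key' S hS a
  set n : ℕ := (supp.filter (fun x => ∀ i ∈ S, x i = a i)).card with hn
  have hsum : ∑ x ∈ supp.filter (fun x => ∀ i ∈ S, x i = a i), ‖ψ x‖ ^ 2 =
      (n : ℝ) * (1 / (M : ℝ)) := by
    rw [Finset.sum_congr rfl (fun x hx => hmod x (Finset.mem_of_mem_filter x hx))]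
    rw [Finset.sum_const, nsmul_eq_mul, hn]
  have hreal : (n : ℝ) * (Q : ℝ) = (M : ℝ) := by
    have h2 : (n : ℝ) * (1 / (M : ℝ)) = 1 / (Q : ℝ) := by
      rw [← hsum, h, hQ]
      push_cast
      ring
    have hM0 : (M : ℝ) ≠ 0 := by positivity
    have hQ0 : (Q : ℝ) ≠ 0 := by positivity
    field_simp at h2
    linarith
  have hnat : n * Q = M := by exact_mod_cast hreal
  exact ⟨n, by rw [← hnat, mul_comm]⟩
end
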